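/- arXiv:2112.14601 — 3 statements merged into one kernel-verified Lean document; each statement's English description precedes it below -/
import Mathlib

section
/- For any real number δ > 0 and any integer N ≥ 1, there exists ε = ε(δ, N) > 0 with the following property. For every Lipschitz function f : ℝ^N → ℝ satisfying sup_{[0,1]^N} f − inf_{[0,1]^N} f ≤ 2ε and every subset E ⊆ (0,1)^N of full Lebesgue measure in [0,1]^N, there exist N+1 sequences (τ^{j,k})_{k≥1} of points of E (for j = 1, …, N+1), a point τ^∞ ∈ (0,1)^N, and vectors v^1, …, v^{N+1} ∈ ℝ^N such that: (i) τ^{j,k} → τ^∞ as k → ∞ for every j; (ii) f is (Fréchet) differentiable at τ^{j,k} for every j and k; (iii) for every j, the gradients ∇f(τ^{j,k}) converge to v^j as k → ∞; and (iv) the convex hull of {v^1, …, v^{N+1}} contains a point v with ‖v‖ ≤ δ. -/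
open Filter Topology MeasureTheory Set

open InnerProductSpace

open scoped RealInnerProductSpace

lemma lip_decrease {ψ : ℝ → ℝ} {K : NNReal} (hψ : LipschitzWith K ψ)
    {a b : ℝ} (hab : a ≤ b) {A : Set ℝ}
    (hA : volume (Icc a b \ A) = 0)
    (hd : ∀ t ∈ A ∩ Icc a b, ∃ d ≤ 0, HasDerivAt ψ d t) :
    ψ b ≤ ψ a := by
  have key : ∀ ε : ℝ, 0 < ε → ψ b ≤ ψ a + ((K : ℝ) + (b - a) + 1) * ε := by
    intro ε hε
    obtain ⟨U, hUsub, hUopen, hUvol⟩ :=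
      Set.exists_isOpen_lt_of_lt (Icc a b \ A) (ENNReal.ofReal ε)
        (by rw [hA]; exact ENNReal.ofReal_pos.2 hε)
    set m : ℝ → ℝ := fun t => (volume (U ∩ Ioc a t)).toReal with hm
    have hfin : ∀ s t : ℝ, volume (U ∩ Ioc s t) ≠ ⊤ :=
      fun s t => ((measure_mono inter_subset_left).trans_lt
        (hUvol.trans ENNReal.ofReal_lt_top)).ne
    have hmmono : Monotone m := by
      intro s t hst
      exact ENNReal.toReal_mono (hfin a t)
        (measure_mono (inter_subset_inter_right _ (Ioc_subset_Ioc_right hst)))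
    have hma : m a = 0 := by simp [hm]
    have hmb : m b ≤ ε := by
      refine ENNReal.toReal_le_of_le_ofReal hε.le ?_
      exact (measure_mono inter_subset_left).trans hUvol.le
    have hmadd : ∀ s t : ℝ, a ≤ s → s ≤ t → m t = m s + (volume (U ∩ Ioc s t)).toReal := by
      intro s t has hst
      have hsplit : U ∩ Ioc a t = (U ∩ Ioc a s) ∪ (U ∩ Ioc s t) := by
        rw [← inter_union_distrib_left, Ioc_union_Ioc_eq_Ioc has hst]
      have hdisj : Disjoint (U ∩ Ioc a s) (U ∩ Ioc s t) := by
        refine Disjoint.mono inter_subset_right inter_subset_right ?_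
        rw [Set.disjoint_left]; rintro x ⟨_, hxs⟩ ⟨hsx, _⟩; exact absurd hsx (not_lt.2 hxs)
      have hmu := measure_union (μ := volume) hdisj
        (hUopen.measurableSet.inter measurableSet_Ioc)
      rw [hm]; simp only
      rw [hsplit, hmu, ENNReal.toReal_add (hfin a s) (hfin s t)]
    have hvol_le : ∀ s t : ℝ, s ≤ t → (volume (U ∩ Ioc s t)).toReal ≤ t - s := by
      intro s t hst
      have h1 : volume (U ∩ Ioc s t) ≤ ENNReal.ofReal (t - s) := by
        refine (measure_mono inter_subset_right).trans ?_
        rw [Real.volume_Ioc]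
      have h2 := ENNReal.toReal_mono ENNReal.ofReal_ne_top h1
      rwa [ENNReal.toReal_ofReal (by linarith)] at h2
    have hmlip : ∀ s t : ℝ, s ≤ t → m t - m s ≤ t - s := by
      intro s t hst
      rcases le_total a s with has | hsa
      · rw [hmadd s t has hst]
        have := hvol_le s t hst; linarith
      · have hms : m s = 0 := by simp [hm, Ioc_eq_empty (not_lt.2 hsa)]
        rcases le_total a t with hat | hta
        · rw [hms, hmadd a t le_rfl hat, hma]
          have := hvol_le a t hat; linarith
        · have hmt : m t = 0 := by simp [hm, Ioc_eq_empty (not_lt.2 hta)]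
          rw [hms, hmt]; linarith
    have hmcont : Continuous m := by
      refine LipschitzWith.continuous (K := 1) (LipschitzWith.of_dist_le_mul fun s t => ?_)
      rw [Real.dist_eq, Real.dist_eq, NNReal.coe_one, one_mul]
      rcases le_total s t with h | h
      · rw [abs_sub_comm s t, abs_of_nonneg (sub_nonneg.2 h),
          abs_sub_comm, abs_of_nonneg (sub_nonneg.2 (hmmono h))]
        exact hmlip s t h
      · rw [abs_of_nonneg (sub_nonneg.2 (hmmono h)), abs_of_nonneg (sub_nonneg.2 h)]
        exact hmlip t s h
    -- The set where the desired bound holds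
    set S : Set ℝ := {t | t ∈ Icc a b ∧ ψ t ≤ ψ a + (K : ℝ) * m t + ε * (t - a)} with hS
    have haS : a ∈ S := by
      refine ⟨⟨le_rfl, hab⟩, ?_⟩
      rw [hma]; simp
    have hSclosed : IsClosed S := by
      refine IsClosed.inter isClosed_Icc ?_
      have hg : Continuous fun t => ψ a + (K : ℝ) * m t + ε * (t - a) :=
        ((continuous_const.add (continuous_const.mul hmcont)).add
          (continuous_const.mul (continuous_id.sub continuous_const)))
      exact isClosed_le hψ.continuous hg
    have hSbdd : BddAbove S := ⟨b, fun t ht => ht.1.2⟩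
    set c := sSup S with hc
    have hcS : c ∈ S := hSclosed.csSup_mem ⟨a, haS⟩ hSbdd
    have hcb : c = b := by
      by_contra hne
      have hcltb : c < b := lt_of_le_of_ne hcS.1.2 hne
      have hac : a ≤ c := hcS.1.1
      -- find a point slightly beyond c still in S
      have hstep : ∃ s, c < s ∧ s ∈ S := by
        by_cases hcA : c ∈ A
        · obtain ⟨d, hd0, hder⟩ := hd c ⟨hcA, hcS.1⟩
          have hslope : Tendsto (slope ψ c) (𝓝[>] c) (𝓝 d) :=
            (hasDerivAt_iff_tendsto_slope.1 hder).mono_left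
              (nhdsWithin_mono c (fun x hx => ne_of_gt hx))
          have hev1 : ∀ᶠ s in 𝓝[>] c, slope ψ c s < ε :=
            hslope.eventually_lt_const (by linarith)
          have hev2 : ∀ᶠ s in 𝓝[>] c, s ∈ Ioo c b :=
            Ioo_mem_nhdsGT_of_mem ⟨le_rfl, hcltb⟩
          obtain ⟨s, hs1, hs2⟩ := (hev1.and hev2).exists
          refine ⟨s, hs2.1, ⟨⟨hac.trans hs2.1.le, hs2.2.le⟩, ?_⟩⟩
          have hsc : 0 < s - c := sub_pos.2 hs2.1
          rw [slope_def_field, div_lt_iff₀ hsc] at hs1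
          have hmono := hmmono hs2.1.le
          have hKnn := K.coe_nonneg
          have := hcS.2
          nlinarith
        · have hcU : c ∈ U := hUsub ⟨hcS.1, hcA⟩
          obtain ⟨r, hr0, hrsub⟩ := Metric.isOpen_iff.1 hUopen c hcU
          set s := min (c + r / 2) b with hs
          have hcs : c < s := lt_min (by linarith) hcltb
          have hsb : s ≤ b := min_le_right _ _
          have hsub : Ioc c s ⊆ U := by
            intro x hx
            apply hrsub
            rw [Metric.mem_ball, Real.dist_eq, abs_of_pos (sub_pos.2 hx.1)]
            have : s ≤ c + r / 2 := min_le_left _ _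
            have := hx.2; linarith
          have hvol : (volume (U ∩ Ioc c s)).toReal = s - c := by
            rw [inter_eq_right.2 hsub, Real.volume_Ioc,
              ENNReal.toReal_ofReal (by linarith)]
          have hmcs : m s = m c + (s - c) := by
            rw [hmadd c s hac hcs.le, hvol]
          refine ⟨s, hcs, ⟨⟨hac.trans hcs.le, hsb⟩, ?_⟩⟩
          have hψcs : ψ s - ψ c ≤ (K : ℝ) * (s - c) := by
            have := hψ.dist_le_mul s c
            rw [Real.dist_eq, Real.dist_eq] at this
            have h2 := (le_abs_self (ψ s - ψ c)).trans this
            rw [abs_of_pos (sub_pos.2 hcs)] at h2; linarith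
          have := hcS.2
          rw [hmcs]
          nlinarith [hε.le]
      obtain ⟨s, hcs, hsS⟩ := hstep
      exact absurd (le_csSup hSbdd hsS) (not_le.2 hcs)
    have := hcS.2
    rw [hcb] at this
    have hKm : (K : ℝ) * m b ≤ (K : ℝ) * ε := by
      exact mul_le_mul_of_nonneg_left hmb K.coe_nonneg
    have hεb : ε * (b - a) = (b - a) * ε := by ring
    nlinarith [this]
  by_contra hlt
  push_neg at hlt
  set M := (K : ℝ) + (b - a) + 1 with hM
  have hM0 : 0 < M := by
    have := K.coe_nonneg; simp only [hM]; linarith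
  have := key ((ψ b - ψ a) / (2 * M)) (by apply div_pos (by linarith) (by linarith))
  have heq : M * ((ψ b - ψ a) / (2 * M)) = (ψ b - ψ a) / 2 := by
    field_simp
  rw [heq] at this
  linarith

lemma ae_line_null {N : ℕ} {Bad : Set (EuclideanSpace ℝ (Fin N))} (hBad : volume Bad = 0)
    (h : EuclideanSpace ℝ (Fin N)) (t : ℝ) :
    ∀ᵐ y ∂(volume : Measure (EuclideanSpace ℝ (Fin N))),
      volume {s : ℝ | s ∈ Icc 0 t ∧ y + s • h ∈ Bad} = 0 := by
  set B' := toMeasurable volume Bad with hB'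
  have hB'meas : MeasurableSet B' := measurableSet_toMeasurable _ _
  have hB'null : volume B' = 0 := by rw [measure_toMeasurable]; exact hBad
  have hsubB : Bad ⊆ B' := subset_toMeasurable _ _
  set ν : Measure ℝ := volume.restrict (Icc 0 t) with hν
  have hmeas_un : Measurable (Function.uncurry fun (y : EuclideanSpace ℝ (Fin N)) (s : ℝ) =>
      B'.indicator (fun _ => (1 : ENNReal)) (y + s • h)) := by
    apply Measurable.indicator measurable_const
    apply measurableSet_preimage ?_ hB'meas
    exact (measurable_fst.add (measurable_snd.smul_const h))
  have hswap := lintegral_lintegral_swap (μ := (volume : Measure (EuclideanSpace ℝ (Fin N))))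
    (ν := ν) hmeas_un.aemeasurable
  have hinner : ∀ s : ℝ, (∫⁻ y, B'.indicator (fun _ => (1 : ENNReal)) (y + s • h)
      ∂(volume : Measure (EuclideanSpace ℝ (Fin N)))) = 0 := by
    intro s
    have heq : ∀ y : EuclideanSpace ℝ (Fin N),
        B'.indicator (fun _ => (1 : ENNReal)) (y + s • h)
          = ((fun y : EuclideanSpace ℝ (Fin N) => y + s • h) ⁻¹' B').indicator
              (fun _ => (1 : ENNReal)) y := by
      intro y
      by_cases hmem : y + s • h ∈ B' <;>
        simp [Set.indicator_apply, hmem, Set.mem_preimage]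
    simp_rw [heq]
    have hmeasf : Measurable fun y : EuclideanSpace ℝ (Fin N) => y + s • h := by
      fun_prop
    rw [lintegral_indicator_const (measurableSet_preimage hmeasf hB'meas)]
    rw [measure_preimage_add_right, hB'null, mul_zero]
  have htot : (∫⁻ y, ∫⁻ s, B'.indicator (fun _ => (1 : ENNReal)) (y + s • h) ∂ν
      ∂(volume : Measure (EuclideanSpace ℝ (Fin N)))) = 0 := by
    rw [hswap]
    rw [show (∫⁻ s, ∫⁻ y, B'.indicator (fun _ => (1:ENNReal)) (y + s • h)
        ∂(volume : Measure (EuclideanSpace ℝ (Fin N))) ∂ν)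
      = ∫⁻ _, (0:ENNReal) ∂ν from lintegral_congr hinner]
    simp
  have hae := (lintegral_eq_zero_iff hmeas_un.lintegral_prod_right').1 htot
  filter_upwards [hae] with y hy
  simp only [Pi.zero_apply, Function.uncurry_apply_pair] at hy
  have hkey : volume ({s : ℝ | y + s • h ∈ B'} ∩ Icc 0 t) = 0 := by
    have hmp : MeasurableSet {s : ℝ | y + s • h ∈ B'} :=
      measurableSet_preimage ((measurable_id.smul_const h).const_add y) hB'meas
    have heq : ∀ s : ℝ, B'.indicator (fun _ => (1 : ENNReal)) (y + s • h)
        = ({s : ℝ | y + s • h ∈ B'}).indicator (fun _ => (1 : ENNReal)) s := by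
      intro s
      by_cases hmem : y + s • h ∈ B' <;>
        simp [Set.indicator_apply, hmem]
    rw [show (∫⁻ s, B'.indicator (fun _ => (1:ENNReal)) (y + s • h) ∂ν)
        = ∫⁻ s, ({s : ℝ | y + s • h ∈ B'}).indicator (fun _ => (1:ENNReal)) s ∂ν
        from lintegral_congr heq] at hy
    rw [hν, lintegral_indicator_const hmp, one_mul, Measure.restrict_apply hmp] at hy
    exact hy
  refine measure_mono_null ?_ hkey
  rintro s ⟨hs1, hs2⟩
  exact ⟨hsubB hs2, hs1⟩

lemma line_decrease {N : ℕ} {f : EuclideanSpace ℝ (Fin N) → ℝ} {L : NNReal}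
    (hf : LipschitzWith L f) (h : EuclideanSpace ℝ (Fin N))
    {y : EuclideanSpace ℝ (Fin N)} {t c : ℝ} (ht : 0 ≤ t)
    {A : Set ℝ} (hnull : volume (Icc 0 t \ A) = 0)
    (hder : ∀ s ∈ A ∩ Icc 0 t, DifferentiableAt ℝ f (y + s • h) ∧
      fderiv ℝ f (y + s • h) h ≤ -c) :
    f (y + t • h) ≤ f y - c * t := by
  set ψ : ℝ → ℝ := fun s => f (y + s • h) + c * s with hψdef
  have hγ : LipschitzWith ‖h‖₊ (fun s : ℝ => y + s • h) := by
    refine LipschitzWith.of_dist_le_mul fun s s' => ?_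
    rw [dist_eq_norm, dist_eq_norm]
    have : (y + s • h) - (y + s' • h) = (s - s') • h := by
      module
    rw [this, norm_smul]
    simp [mul_comm]
  have hψlip : LipschitzWith (L * ‖h‖₊ + ‖c‖₊) ψ :=
    LipschitzWith.add (hf.comp hγ) (LipschitzWith.of_dist_le_mul fun s s' => by
      rw [Real.dist_eq, Real.dist_eq, ← mul_sub, abs_mul]
      exact mul_le_mul_of_nonneg_right (le_of_eq rfl) (abs_nonneg _) |>.trans
        (by rw [coe_nnnorm, Real.norm_eq_abs]))
  have hψd : ∀ s ∈ A ∩ Icc 0 t, ∃ d ≤ 0, HasDerivAt ψ d s := by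
    intro s hs
    obtain ⟨hdiff, hle⟩ := hder s hs
    have hline : HasDerivAt (fun s : ℝ => y + s • h) h s := by
      simpa using ((hasDerivAt_id s).smul_const h).const_add y
    have hcomp : HasDerivAt (fun s : ℝ => f (y + s • h)) (fderiv ℝ f (y + s • h) h) s :=
      hdiff.hasFDerivAt.comp_hasDerivAt s hline
    refine ⟨fderiv ℝ f (y + s • h) h + c, by linarith, ?_⟩
    have := hcomp.add ((hasDerivAt_id s).const_mul c)
    simp only [mul_one] at this
    exact this
  have := lip_decrease hψlip ht hnull hψd
  simp only [hψdef, zero_smul, add_zero, mul_zero] at this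
  linarith

lemma key_local {N : ℕ} {f : EuclideanSpace ℝ (Fin N) → ℝ} {L : NNReal}
    (hf : LipschitzWith L f) {Q D : Set (EuclideanSpace ℝ (Fin N))}
    (hD : ∀ z ∈ D, DifferentiableAt ℝ f z)
    (hnull : volume (Q \ D) = 0)
    {x0 : EuclideanSpace ℝ (Fin N)} {r μ η : ℝ} (hr : 0 < r) (hη : 0 < η) (hμ : 0 ≤ μ)
    (hball : Metric.closedBall x0 (2*r) ⊆ Q)
    (hmin : ∀ x ∈ Metric.closedBall x0 (2*r), f x0 - μ * ‖x - x0‖ ≤ f x) :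
    ∃ w ∈ convexHull ℝ (gradient f '' (D ∩ Metric.closedBall x0 (2*r))), ‖w‖ ≤ μ + η := by
  by_contra hcon
  push_neg at hcon
  set G := gradient f '' (D ∩ Metric.closedBall x0 (2*r)) with hG
  set C := closure (convexHull ℝ G) with hC
  -- full measure of good points in any ball inside Q
  have hgoodball : ∀ ρ : ℝ, 0 < ρ → ρ ≤ 2*r → (D ∩ Metric.ball x0 ρ).Nonempty := by
    intro ρ hρ hρr
    by_contra hemp
    rw [Set.not_nonempty_iff_eq_empty] at hemp
    have hsub : Metric.ball x0 ρ ⊆ Q \ D := by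
      intro z hz
      refine ⟨hball (Metric.closedBall_subset_closedBall hρr
        (Metric.ball_subset_closedBall hz)), fun hzD => ?_⟩
      rw [Set.eq_empty_iff_forall_notMem] at hemp
      exact hemp z ⟨hzD, hz⟩
    have := measure_mono_null hsub hnull
    exact absurd this (Metric.measure_ball_pos volume x0 hρ).ne'
  have hCne : C.Nonempty := by
    obtain ⟨z, hz⟩ := hgoodball (2*r) (by linarith) le_rfl
    exact ⟨gradient f z, subset_closure (subset_convexHull ℝ G
      ⟨z, ⟨hz.1, Metric.ball_subset_closedBall hz.2⟩, rfl⟩)⟩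
  have hCconv : Convex ℝ C := (convex_convexHull ℝ G).closure
  have hCnorm : ∀ w ∈ C, μ + η ≤ ‖w‖ := by
    have hsub : convexHull ℝ G ⊆ {w | μ + η ≤ ‖w‖} := fun w hw => (hcon w hw).le
    have hclosed : IsClosed {w : EuclideanSpace ℝ (Fin N) | μ + η ≤ ‖w‖} :=
      isClosed_le continuous_const continuous_norm
    exact fun w hw => closure_minimal hsub hclosed hw
  -- projection of 0 on C
  obtain ⟨p, hpC, hpmin⟩ := exists_norm_eq_iInf_of_complete_convex hCne
    (isClosed_closure.isComplete) hCconv (0 : EuclideanSpace ℝ (Fin N))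
  have hproj := (norm_eq_iInf_iff_real_inner_le_zero hCconv hpC).1 hpmin
  have hpnorm : μ + η ≤ ‖p‖ := hCnorm p hpC
  have hppos : 0 < ‖p‖ := lt_of_lt_of_le (by linarith) hpnorm
  have hinner : ∀ w ∈ C, ‖p‖^2 ≤ ⟪p, w⟫ := by
    intro w hw
    have := hproj w hw
    have hexp : ⟪(0:EuclideanSpace ℝ (Fin N)) - p, w - p⟫ = -⟪p, w⟫ + ‖p‖^2 := by
      rw [zero_sub, inner_neg_left, inner_sub_right, real_inner_self_eq_norm_sq]
      ring
    rw [hexp] at this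
    linarith
  set hdir : EuclideanSpace ℝ (Fin N) := -(‖p‖⁻¹ • p) with hhdir
  have hdirnorm : ‖hdir‖ = 1 := by
    rw [hhdir, norm_neg, norm_smul, norm_inv, norm_norm, inv_mul_cancel₀ hppos.ne']
  have hfderiv : ∀ z ∈ D ∩ Metric.closedBall x0 (2*r),
      fderiv ℝ f z hdir ≤ -(μ + η) := by
    intro z hz
    have hgradmem : gradient f z ∈ C :=
      subset_closure (subset_convexHull ℝ G ⟨z, hz, rfl⟩)
    have h1 := hinner _ hgradmem
    have h2 : fderiv ℝ f z hdir = ⟪gradient f z, hdir⟫ := by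
      rw [show gradient f z = (toDual ℝ (EuclideanSpace ℝ (Fin N))).symm (fderiv ℝ f z) from rfl,
        toDual_symm_apply]
    rw [h2, hhdir, inner_neg_right, inner_smul_right, real_inner_comm]
    have h3 : ‖p‖⁻¹ * ⟪p, gradient f z⟫ ≥ ‖p‖⁻¹ * ‖p‖^2 := by
      exact mul_le_mul_of_nonneg_left h1 (inv_nonneg.2 hppos.le)
    have h4 : ‖p‖⁻¹ * ‖p‖^2 = ‖p‖ := by
      field_simp [pow_two]
    nlinarith
  -- choose good starting points converging to x0
  have hae := ae_line_null hnull hdir r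
  have hyk : ∀ k : ℕ, ∃ y : EuclideanSpace ℝ (Fin N),
      dist y x0 < min r (1/(k+1)) ∧
      volume {s : ℝ | s ∈ Icc 0 r ∧ y + s • hdir ∈ Q \ D} = 0 := by
    intro k
    have hρ : 0 < min r (1/(k+1)) := lt_min hr (by positivity)
    by_contra hemp
    push_neg at hemp
    have hsub : Metric.ball x0 (min r (1/(k+1))) ⊆
        {y | ¬ volume {s : ℝ | s ∈ Icc 0 r ∧ y + s • hdir ∈ Q \ D} = 0} := by
      intro y hy
      exact hemp y (by rwa [Metric.mem_ball] at hy)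
    have hnull2 : volume {y : EuclideanSpace ℝ (Fin N) |
        ¬ volume {s : ℝ | s ∈ Icc 0 r ∧ y + s • hdir ∈ Q \ D} = 0} = 0 := hae
    have := measure_mono_null hsub hnull2
    exact absurd this (Metric.measure_ball_pos volume x0 hρ).ne'
  choose y hy1 hy2 using hyk
  -- each y k gives decrease along the line
  have hdec : ∀ k : ℕ, f (y k + r • hdir) ≤ f (y k) - (μ + η) * r := by
    intro k
    have hyball : dist (y k) x0 < r := lt_of_lt_of_le (hy1 k) (min_le_left _ _)
    refine line_decrease hf hdir hr.le (A := {s : ℝ | y k + s • hdir ∈ D}) ?_ ?_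
    · refine measure_mono_null ?_ (hy2 k)
      rintro s ⟨hs1, hs2⟩
      refine ⟨hs1, ?_, hs2⟩
      apply hball
      rw [Metric.mem_closedBall]
      calc dist (y k + s • hdir) x0 ≤ dist (y k + s • hdir) (y k) + dist (y k) x0 :=
            dist_triangle _ _ _
        _ ≤ s + r := by
            rw [dist_self_add_left, norm_smul, hdirnorm, mul_one,
              Real.norm_eq_abs, abs_of_nonneg hs1.1]
            exact add_le_add le_rfl hyball.le
        _ ≤ 2*r := by have := hs1.2; linarith
    · rintro s ⟨hsD, hs1⟩
      have hmem : y k + s • hdir ∈ D ∩ Metric.closedBall x0 (2*r) := by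
        refine ⟨hsD, ?_⟩
        rw [Metric.mem_closedBall]
        calc dist (y k + s • hdir) x0 ≤ dist (y k + s • hdir) (y k) + dist (y k) x0 :=
              dist_triangle _ _ _
          _ ≤ s + r := by
              rw [dist_self_add_left, norm_smul, hdirnorm, mul_one,
                Real.norm_eq_abs, abs_of_nonneg hs1.1]
              exact add_le_add le_rfl hyball.le
          _ ≤ 2*r := by have := hs1.2; linarith
      exact ⟨hD _ hmem.1, hfderiv _ hmem⟩
  -- pass to the limit
  have hylim : Tendsto y atTop (𝓝 x0) := by
    rw [tendsto_iff_dist_tendsto_zero]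
    refine squeeze_zero (fun k => dist_nonneg) (fun k => (hy1 k).le.trans (min_le_right _ _)) ?_
    exact tendsto_one_div_add_atTop_nhds_zero_nat
  have hlim1 : Tendsto (fun k => f (y k + r • hdir)) atTop (𝓝 (f (x0 + r • hdir))) :=
    (hf.continuous.tendsto _).comp (hylim.add_const _)
  have hlim2 : Tendsto (fun k => f (y k) - (μ + η) * r) atTop (𝓝 (f x0 - (μ + η) * r)) :=
    ((hf.continuous.tendsto _).comp hylim).sub_const _
  have hfinal : f (x0 + r • hdir) ≤ f x0 - (μ + η) * r :=
    le_of_tendsto_of_tendsto' hlim1 hlim2 hdec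
  have hmem : x0 + r • hdir ∈ Metric.closedBall x0 (2*r) := by
    rw [Metric.mem_closedBall, dist_self_add_left, norm_smul, hdirnorm, mul_one,
      Real.norm_eq_abs, abs_of_pos hr]
    linarith
  have := hmin _ hmem
  have hnorm : ‖(x0 + r • hdir) - x0‖ = r := by
    rw [add_sub_cancel_left, norm_smul, hdirnorm, mul_one, Real.norm_eq_abs, abs_of_pos hr]
  rw [hnorm] at this
  nlinarith

lemma caratheodory_package {N : ℕ} {S : Set (EuclideanSpace ℝ (Fin N))}
    {w : EuclideanSpace ℝ (Fin N)} (hw : w ∈ convexHull ℝ S) :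
    ∃ (p : Fin (N+1) → EuclideanSpace ℝ (Fin N)) (lam : Fin (N+1) → ℝ),
      (∀ j, p j ∈ S) ∧ (∀ j, 0 ≤ lam j) ∧ (∑ j, lam j = 1) ∧ (∑ j, lam j • p j = w) := by
  obtain ⟨ι, hfin, z, wts, hzS, hai, hwpos, hwsum, hwvec⟩ :=
    eq_pos_convex_span_of_mem_convexHull hw
  have hne : Nonempty ι := by
    by_contra hemp
    rw [not_nonempty_iff] at hemp
    rw [Finset.sum_of_isEmpty] at hwsum
    exact one_ne_zero hwsum.symm
  have hcard : Fintype.card ι ≤ N + 1 := by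
    have h1 := hai.card_le_finrank_succ
    have h2 : Module.finrank ℝ ↥(vectorSpan ℝ (range z)) ≤
        Module.finrank ℝ (EuclideanSpace ℝ (Fin N)) := Submodule.finrank_le _
    have h3 : Module.finrank ℝ (EuclideanSpace ℝ (Fin N)) = N := finrank_euclideanSpace_fin
    omega
  have hemb : Nonempty (ι ↪ Fin (N + 1)) := by
    rw [Function.Embedding.nonempty_iff_card_le, Fintype.card_fin]
    exact hcard
  obtain ⟨e⟩ := hemb
  classical
  set p : Fin (N+1) → EuclideanSpace ℝ (Fin N) :=
    fun j => if h : ∃ i, e i = j then z h.choose else z (Classical.arbitrary ι) with hp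
  set lam : Fin (N+1) → ℝ :=
    fun j => if h : ∃ i, e i = j then wts h.choose else 0 with hlam
  have hpj : ∀ j, p j = if h : ∃ i, e i = j then z h.choose else z (Classical.arbitrary ι) :=
    fun j => rfl
  have hlamj : ∀ j, lam j = if h : ∃ i, e i = j then wts h.choose else 0 :=
    fun j => rfl
  have hchoose : ∀ i : ι, (show ∃ i', e i' = e i from ⟨i, rfl⟩).choose = i := by
    intro i
    have := (show ∃ i', e i' = e i from ⟨i, rfl⟩).choose_spec
    exact e.injective this
  have hlame : ∀ i : ι, lam (e i) = wts i := by
    intro i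
    rw [hlamj, dif_pos ⟨i, rfl⟩, hchoose i]
  have hpe : ∀ i : ι, p (e i) = z i := by
    intro i
    rw [hpj, dif_pos ⟨i, rfl⟩, hchoose i]
  have hsum_eq : ∀ (F : Fin (N+1) → EuclideanSpace ℝ (Fin N)) (G : ι → EuclideanSpace ℝ (Fin N)),
      (∀ i, F (e i) = G i) → (∀ j, (¬ ∃ i, e i = j) → F j = 0) → ∑ j, F j = ∑ i, G i := by
    intro F G hFG hF0
    rw [← Finset.sum_subset (Finset.subset_univ (Finset.univ.image e))
      (fun j _ hj => hF0 j (by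
        intro ⟨i, hi⟩
        exact hj (Finset.mem_image.2 ⟨i, Finset.mem_univ i, hi⟩)))]
    rw [Finset.sum_image (fun i _ i' _ h => e.injective h)]
    exact Finset.sum_congr rfl (fun i _ => hFG i)
  refine ⟨p, lam, ?_, ?_, ?_, ?_⟩
  · intro j
    rw [hpj]
    by_cases h : ∃ i, e i = j
    · rw [dif_pos h]; exact hzS ⟨h.choose, rfl⟩
    · rw [dif_neg h]; exact hzS ⟨Classical.arbitrary ι, rfl⟩
  · intro j
    rw [hlamj]
    by_cases h : ∃ i, e i = j
    · rw [dif_pos h]; exact (hwpos _).le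
    · rw [dif_neg h]
  · -- sum of lam = 1 : use a real-valued version of hsum_eq
    have : ∑ j, lam j = ∑ i, wts i := by
      rw [← Finset.sum_subset (Finset.subset_univ (Finset.univ.image e))
        (fun j _ hj => by
          rw [hlamj, dif_neg (fun ⟨i, hi⟩ => hj (Finset.mem_image.2 ⟨i, Finset.mem_univ i, hi⟩))])]
      rw [Finset.sum_image (fun i _ i' _ h => e.injective h)]
      exact Finset.sum_congr rfl (fun i _ => hlame i)
    rw [this, hwsum]
  · have := hsum_eq (fun j => lam j • p j) (fun i => wts i • z i)
      (fun i => by simp only [hlame, hpe])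
      (fun j hj => by simp only [hlamj, dif_neg hj, zero_smul])
    rw [this, hwvec]

lemma abs_coord_le_norm {N : ℕ} (x : EuclideanSpace ℝ (Fin N)) (i : Fin N) :
    |x i| ≤ ‖x‖ := by
  rw [EuclideanSpace.norm_eq, ← Real.sqrt_sq_eq_abs]
  apply Real.sqrt_le_sqrt
  have : |x i| ^ 2 ≤ ∑ j, ‖x j‖ ^ 2 := by
    have := Finset.single_le_sum (f := fun j => ‖x j‖ ^ 2)
      (fun j _ => sq_nonneg _) (Finset.mem_univ i)
    simpa [Real.norm_eq_abs, sq_abs] using this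
  simpa [sq_abs] using this

/-- Technical lemma of Marques–Neves–Song (Lemma 3.4): for any `δ > 0` and `N ≥ 1`
there is `ε > 0` such that any Lipschitz function on `ℝ^N` with oscillation at most `2ε`
on the unit cube, and any full-measure subset `E` of the open cube, admits `N+1`
sequences in `E` converging to a common point of the open cube, at which `f` is
differentiable, whose gradients converge to vectors whose convex hull comes
`δ`-close to the origin. -/
theorem stmt_0 :
    ∀ δ : ℝ, 0 < δ → ∀ N : ℕ, 1 ≤ N →
    ∃ ε : ℝ, 0 < ε ∧
      ∀ (f : EuclideanSpace ℝ (Fin N) → ℝ) (L : NNReal), LipschitzWith L f →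
        sSup (f '' {x | ∀ i, x i ∈ Icc (0:ℝ) 1}) -
            sInf (f '' {x | ∀ i, x i ∈ Icc (0:ℝ) 1}) ≤ 2 * ε →
        ∀ E : Set (EuclideanSpace ℝ (Fin N)),
          E ⊆ {x | ∀ i, x i ∈ Ioo (0:ℝ) 1} →
          volume ({x : EuclideanSpace ℝ (Fin N) | ∀ i, x i ∈ Icc (0:ℝ) 1} \ E) = 0 →
          ∃ (τ : Fin (N + 1) → ℕ → EuclideanSpace ℝ (Fin N))
            (τinf : EuclideanSpace ℝ (Fin N))
            (v : Fin (N + 1) → EuclideanSpace ℝ (Fin N)),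
            (∀ j k, τ j k ∈ E) ∧
            (∀ i, τinf i ∈ Ioo (0:ℝ) 1) ∧
            (∀ j, Tendsto (τ j) atTop (𝓝 τinf)) ∧
            (∀ j k, DifferentiableAt ℝ f (τ j k)) ∧
            (∀ j, Tendsto (fun k => gradient f (τ j k)) atTop (𝓝 (v j))) ∧
            ∃ w ∈ convexHull ℝ (Set.range v), ‖w‖ ≤ δ := by
  intro δ hδ N hN
  refine ⟨δ/6, by linarith, ?_⟩
  set ε := δ/6 with hε
  intro f L hf hosc E hEsub hEnull
  set Q : Set (EuclideanSpace ℝ (Fin N)) := {x | ∀ i, x i ∈ Icc (0:ℝ) 1} with hQ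
  -- the cube is compact
  have hQclosed : IsClosed Q := by
    have : Q = ⋂ i, (fun x : EuclideanSpace ℝ (Fin N) => x i) ⁻¹' (Icc (0:ℝ) 1) := by
      ext x; simp [hQ, Set.mem_iInter]
    rw [this]
    exact isClosed_iInter fun i =>
      IsClosed.preimage (EuclideanSpace.proj i).continuous isClosed_Icc
  have hQbdd : Bornology.IsBounded Q := by
    rw [isBounded_iff_forall_norm_le]
    refine ⟨Real.sqrt N, fun x hx => ?_⟩
    rw [EuclideanSpace.norm_eq]
    apply Real.sqrt_le_sqrt
    calc ∑ i, ‖x i‖ ^ 2 ≤ ∑ _i : Fin N, 1 := by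
          refine Finset.sum_le_sum fun i _ => ?_
          have h1 := (hx i).1; have h2 := (hx i).2
          rw [Real.norm_eq_abs, abs_of_nonneg h1]
          nlinarith
      _ = N := by simp
  have hQcompact : IsCompact Q := Metric.isCompact_of_isClosed_isBounded hQclosed hQbdd
  set center : EuclideanSpace ℝ (Fin N) := WithLp.toLp 2 (fun _ => (1:ℝ)/2) with hcenter
  have hcenterQ : center ∈ Q := fun i => ⟨by norm_num, by norm_num⟩
  have hQne : Q.Nonempty := ⟨center, hcenterQ⟩
  -- oscillation bound
  have hoscQ : ∀ x ∈ Q, ∀ y ∈ Q, f x - f y ≤ 2 * ε := by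
    intro x hx y hy
    have himg : (f '' Q).Nonempty := ⟨f x, ⟨x, hx, rfl⟩⟩
    have hbddA : BddAbove (f '' Q) := (hQcompact.image hf.continuous).bddAbove
    have hbddB : BddBelow (f '' Q) := (hQcompact.image hf.continuous).bddBelow
    have h1 : f x ≤ sSup (f '' Q) := le_csSup hbddA ⟨x, hx, rfl⟩
    have h2 : sInf (f '' Q) ≤ f y := csInf_le hbddB ⟨y, hy, rfl⟩
    linarith [hosc]
  -- minimizer of the perturbed function
  set g : EuclideanSpace ℝ (Fin N) → ℝ := fun x => f x + 5*ε*‖x - center‖ with hg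
  have hgcont : ContinuousOn g Q := by
    apply Continuous.continuousOn
    exact hf.continuous.add (continuous_const.mul ((continuous_id.sub continuous_const).norm))
  obtain ⟨τ0, hτ0Q, hτ0min⟩ := hQcompact.exists_isMinOn hQne hgcont
  have hτ0min' : ∀ x ∈ Q, g τ0 ≤ g x := fun x hx => hτ0min hx
  have hεpos : 0 < ε := by rw [hε]; linarith
  -- the minimizer is interior
  have hτ0int : ∀ i, τ0 i ∈ Ioo (0:ℝ) 1 := by
    intro i
    by_contra hcon
    have hIcc := hτ0Q i
    have hbd : τ0 i = 0 ∨ τ0 i = 1 := by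
      rw [Set.mem_Ioo] at hcon
      push_neg at hcon
      rcases le_or_gt (τ0 i) 0 with h | h
      · exact Or.inl (le_antisymm h hIcc.1)
      · exact Or.inr (le_antisymm hIcc.2 (hcon h))
    have hhalf : |(τ0 - center) i| = 1/2 := by
      have : (τ0 - center) i = τ0 i - 1/2 := by
        simp [hcenter]
      rw [this]
      rcases hbd with h | h <;> rw [h] <;> norm_num
    have hnorm : (1:ℝ)/2 ≤ ‖τ0 - center‖ := hhalf ▸ abs_coord_le_norm (τ0 - center) i
    have hmin := hτ0min' center hcenterQ
    have hfosc := hoscQ center hcenterQ τ0 hτ0Q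
    rw [hg] at hmin
    simp only [sub_self, norm_zero, mul_zero, add_zero] at hmin
    nlinarith
  -- almost-minimality of f at τ0
  have halmost : ∀ x ∈ Q, f τ0 - 5*ε*‖x - τ0‖ ≤ f x := by
    intro x hx
    have hmin := hτ0min' x hx
    rw [hg] at hmin
    simp only at hmin
    have htri : ‖x - center‖ ≤ ‖x - τ0‖ + ‖τ0 - center‖ := by
      calc ‖x - center‖ = ‖(x - τ0) + (τ0 - center)‖ := by abel_nf
        _ ≤ ‖x - τ0‖ + ‖τ0 - center‖ := norm_add_le _ _
    nlinarith [norm_nonneg (x - τ0), norm_nonneg (τ0 - center), hεpos.le]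
  -- interior radius
  have hopen : IsOpen {x : EuclideanSpace ℝ (Fin N) | ∀ i, x i ∈ Ioo (0:ℝ) 1} := by
    have : {x : EuclideanSpace ℝ (Fin N) | ∀ i, x i ∈ Ioo (0:ℝ) 1}
        = ⋂ i, (fun x : EuclideanSpace ℝ (Fin N) => x i) ⁻¹' (Ioo (0:ℝ) 1) := by
      ext x; simp [Set.mem_iInter]
    rw [this]
    exact isOpen_iInter_of_finite fun i =>
      IsOpen.preimage (EuclideanSpace.proj i).continuous isOpen_Ioo
  obtain ⟨r0, hr0pos, hr0sub⟩ := Metric.isOpen_iff.1 hopen τ0 hτ0int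
  have hballQ : Metric.ball τ0 r0 ⊆ Q := hr0sub.trans (fun x hx i => ⟨(hx i).1.le, (hx i).2.le⟩)
  -- the good set
  set D : Set (EuclideanSpace ℝ (Fin N)) := E ∩ {z | DifferentiableAt ℝ f z} with hD
  have hDdiff : ∀ z ∈ D, DifferentiableAt ℝ f z := fun z hz => hz.2
  have hDnull : volume (Q \ D) = 0 := by
    have hsub : Q \ D ⊆ (Q \ E) ∪ {z | ¬ DifferentiableAt ℝ f z} := by
      rintro z ⟨hzQ, hzD⟩
      rw [hD, Set.mem_inter_iff] at hzD
      push_neg at hzD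
      by_cases hzE : z ∈ E
      · exact Or.inr (hzD hzE)
      · exact Or.inl ⟨hzQ, hzE⟩
    refine measure_mono_null hsub (measure_union_null hEnull ?_)
    have := hf.ae_differentiableAt (μ := volume)
    rwa [ae_iff] at this
  -- apply key_local for each n
  have hkey : ∀ n : ℕ, ∃ w ∈ convexHull ℝ
      (gradient f '' (D ∩ Metric.closedBall τ0 (2 * (min (r0/4) (1/(n+1)))))),
      ‖w‖ ≤ 5*ε + 1/(n+1) := by
    intro n
    set r : ℝ := min (r0/4) (1/(n+1)) with hr
    have hrpos : 0 < r := lt_min (by linarith) (by positivity)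
    have hballsub : Metric.closedBall τ0 (2*r) ⊆ Q := by
      refine (Metric.closedBall_subset_ball ?_).trans hballQ
      have : r ≤ r0/4 := min_le_left _ _
      linarith
    exact key_local hf hDdiff hDnull hrpos (by positivity) (by positivity) hballsub
      (fun x hx => halmost x (hballsub hx))
  -- extract Carathéodory data
  have hcp : ∀ n : ℕ, ∃ (q : Fin (N+1) → EuclideanSpace ℝ (Fin N)) (lam : Fin (N+1) → ℝ),
      (∀ j, q j ∈ D) ∧ (∀ j, dist (q j) τ0 ≤ 2/(n+1)) ∧ (∀ j, 0 ≤ lam j) ∧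
      (∑ j, lam j = 1) ∧ ‖∑ j, lam j • gradient f (q j)‖ ≤ 5*ε + 1/(n+1) := by
    intro n
    obtain ⟨w, hwmem, hwnorm⟩ := hkey n
    obtain ⟨p, lam, hpS, hlam0, hlam1, hpw⟩ := caratheodory_package hwmem
    have hq : ∀ j, ∃ z, z ∈ D ∧ z ∈ Metric.closedBall τ0 (2 * (min (r0/4) (1/(n+1)))) ∧
        gradient f z = p j := by
      intro j
      obtain ⟨z, ⟨hz1, hz2⟩, hz3⟩ := hpS j
      exact ⟨z, hz1, hz2, hz3⟩
    choose q hq1 hq2 hq3 using hq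
    refine ⟨q, lam, hq1, ?_, hlam0, hlam1, ?_⟩
    · intro j
      have := hq2 j
      rw [Metric.mem_closedBall] at this
      refine this.trans ?_
      have : min (r0/4) (1/(n+1:ℝ)) ≤ 1/(n+1) := min_le_right _ _
      rw [show (2:ℝ)/(n+1) = 2 * (1/(n+1)) by ring]
      linarith
    · have : ∑ j, lam j • gradient f (q j) = w := by
        rw [← hpw]
        exact Finset.sum_congr rfl fun j _ => by rw [hq3 j]
      rw [this]
      exact hwnorm
  choose q lam hqD hqdist hlam0 hlam1 hsumnorm using hcp
  -- gradient bound
  have hgradbd : ∀ z : EuclideanSpace ℝ (Fin N), ‖gradient f z‖ ≤ L := by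
    intro z
    have : ‖gradient f z‖ = ‖fderiv ℝ f z‖ := by
      rw [show gradient f z
          = (InnerProductSpace.toDual ℝ (EuclideanSpace ℝ (Fin N))).symm (fderiv ℝ f z) from rfl]
      exact LinearIsometryEquiv.norm_map _ _
    rw [this]
    exact norm_fderiv_le_of_lipschitz ℝ hf
  -- Bolzano–Weierstrass
  set u : ℕ → (Fin (N+1) → ℝ) × (Fin (N+1) → EuclideanSpace ℝ (Fin N)) :=
    fun n => (lam n, fun j => gradient f (q n j)) with hu
  have hubdd : ∀ n, u n ∈ Metric.closedBall (0 : (Fin (N+1) → ℝ) ×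
      (Fin (N+1) → EuclideanSpace ℝ (Fin N))) (1 + L) := by
    intro n
    rw [Metric.mem_closedBall, dist_zero_right, Prod.norm_def]
    have hL : (0:ℝ) ≤ 1 + L := by positivity
    apply max_le
    · rw [pi_norm_le_iff_of_nonneg hL]
      intro j
      rw [Real.norm_eq_abs, abs_of_nonneg (hlam0 n j)]
      have : lam n j ≤ ∑ j', lam n j' :=
        Finset.single_le_sum (fun j' _ => hlam0 n j') (Finset.mem_univ j)
      rw [hlam1 n] at this
      have := L.coe_nonneg
      linarith
    · rw [pi_norm_le_iff_of_nonneg hL]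
      intro j
      have := hgradbd (q n j)
      simp only [hu]
      linarith
  obtain ⟨a, _, φ, hφmono, hφtend⟩ :=
    tendsto_subseq_of_bounded Metric.isBounded_closedBall hubdd
  -- limits of the pieces
  have htend1 : Tendsto (fun k => lam (φ k)) atTop (𝓝 a.1) :=
    ((continuous_fst.tendsto a).comp hφtend)
  have htend2 : Tendsto (fun k => fun j => gradient f (q (φ k) j)) atTop (𝓝 a.2) :=
    ((continuous_snd.tendsto a).comp hφtend)
  have htendlamj : ∀ j, Tendsto (fun k => lam (φ k) j) atTop (𝓝 (a.1 j)) :=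
    fun j => (tendsto_pi_nhds.1 htend1) j
  have htendgradj : ∀ j, Tendsto (fun k => gradient f (q (φ k) j)) atTop (𝓝 (a.2 j)) :=
    fun j => (tendsto_pi_nhds.1 htend2) j
  refine ⟨fun j k => q (φ k) j, τ0, a.2, ?_, hτ0int, ?_, ?_, htendgradj, ?_⟩
  · exact fun j k => (hqD (φ k) j).1
  · intro j
    rw [tendsto_iff_dist_tendsto_zero]
    refine squeeze_zero (g := fun k : ℕ => 2/((k:ℝ)+1)) (fun k => dist_nonneg)
      (fun k => ?_) ?_
    · refine (hqdist (φ k) j).trans ?_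
      have h1 : (k:ℝ) + 1 ≤ (φ k : ℝ) + 1 := by
        exact_mod_cast add_le_add_left (Nat.cast_le.2 hφmono.le_apply) 1
      have h2 : (0:ℝ) < k + 1 := by positivity
      exact div_le_div_of_nonneg_left (by norm_num) h2 h1
    · have h3 : Tendsto (fun k : ℕ => 2/((k:ℝ)+1)) atTop (𝓝 0) := by
        have h1 := tendsto_one_div_add_atTop_nhds_zero_nat (𝕜 := ℝ)
        have h2 := h1.const_mul (2:ℝ)
        simp only [mul_zero] at h2
        refine h2.congr (fun k => ?_)
        ring
      exact h3
  · exact fun j k => (hqD (φ k) j).2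
  · -- the convex combination
    set w : EuclideanSpace ℝ (Fin N) := ∑ j, a.1 j • a.2 j with hw
    have hlampos : ∀ j, 0 ≤ a.1 j := fun j =>
      le_of_tendsto_of_tendsto' tendsto_const_nhds (htendlamj j) (fun k => hlam0 (φ k) j)
    have hlamsum : ∑ j, a.1 j = 1 := by
      have h1 : Tendsto (fun k => ∑ j, lam (φ k) j) atTop (𝓝 (∑ j, a.1 j)) :=
        tendsto_finset_sum _ (fun j _ => htendlamj j)
      have h2 : Tendsto (fun k => ∑ j, lam (φ k) j) atTop (𝓝 1) := by
        simp_rw [hlam1]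
        exact tendsto_const_nhds
      exact tendsto_nhds_unique h1 h2
    have hwmem : w ∈ convexHull ℝ (Set.range a.2) := by
      rw [hw, ← Finset.centerMass_eq_of_sum_1 _ _ hlamsum]
      exact Finset.centerMass_mem_convexHull _ (fun j _ => hlampos j)
        (by rw [hlamsum]; norm_num) (fun j _ => Set.mem_range_self j)
    refine ⟨w, hwmem, ?_⟩
    have hwtend : Tendsto (fun k => ∑ j, lam (φ k) j • gradient f (q (φ k) j))
        atTop (𝓝 w) := by
      rw [hw]
      exact tendsto_finset_sum _ (fun j _ => (htendlamj j).smul (htendgradj j))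
    have hnormtend : Tendsto (fun k => ‖∑ j, lam (φ k) j • gradient f (q (φ k) j)‖)
        atTop (𝓝 ‖w‖) := hwtend.norm
    have hbound : Tendsto (fun k : ℕ => 5*ε + 1/((k:ℝ)+1)) atTop (𝓝 (5*ε)) := by
      have := tendsto_one_div_add_atTop_nhds_zero_nat (𝕜 := ℝ)
      simpa using tendsto_const_nhds.add this
    have h5 : ‖w‖ ≤ 5*ε :=
      le_of_tendsto_of_tendsto' hnormtend hbound (fun k => (hsumnorm (φ k)).trans (by
        have h1 : (k:ℝ) + 1 ≤ (φ k : ℝ) + 1 := by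
          exact_mod_cast add_le_add_left (Nat.cast_le.2 hφmono.le_apply) 1
        have h2 : (0:ℝ) < k + 1 := by positivity
        have := div_le_div_of_nonneg_left (by norm_num : (0:ℝ) ≤ 1) h2 h1
        linarith [div_le_div_of_nonneg_left (show (0:ℝ) ≤ 1 by norm_num) h2 h1]))
    rw [hε] at h5
    linarith
end

section
/- Let X be a compact metrizable topological space, φ : X → X a continuous map, and μ a Borel probability measure on X. For a point x ∈ X and an integer d ≥ 1 with φ^d(x) = x, write S_{x,d}(f) = Σ_{i=0}^{d−1} f(φ^i(x)) for f : X → ℝ. Suppose there is a sequence of 'orbit sets': for each N ≥ 1, an integer k_N ≥ 1, points x_{N,1}, …, x_{N,k_N} ∈ X, integers d_{N,1}, …, d_{N,k_N} ≥ 1 with φ^{d_{N,j}}(x_{N,j}) = x_{N,j} for all j, and positive real weights a_{N,1}, …, a_{N,k_N}, such that for every continuous f : X → ℝ, (Σ_{j=1}^{k_N} a_{N,j} · S_{x_{N,j}, d_{N,j}}(f)) / (Σ_{j=1}^{k_N} a_{N,j} · d_{N,j}) → ∫_X f dμ as N → ∞. Then there exist points y_1, y_2, … ∈ X and integers e_1,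 e_2, … ≥ 1 with φ^{e_M}(y_M) = y_M for every M, such that for every continuous f : X → ℝ, (Σ_{M=1}^{N} S_{y_M, e_M}(f)) / (Σ_{M=1}^{N} e_M) → ∫_X f dμ as N → ∞. -/
namespace Stmt2Aux

open Filter Topology Finset

/-- partial sums of lengths -/
def psum (ℓ : ℕ → ℕ) (t : ℕ) : ℕ := ∑ v ∈ Finset.range t, ℓ v

lemma psum_zero (ℓ : ℕ → ℕ) : psum ℓ 0 = 0 := rfl

lemma psum_succ (ℓ : ℕ → ℕ) (t : ℕ) : psum ℓ (t+1) = psum ℓ t + ℓ t :=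
  Finset.sum_range_succ ℓ t

lemma psum_mono (ℓ : ℕ → ℕ) : Monotone (psum ℓ) := by
  intro s t h
  exact Finset.sum_le_sum_of_subset (Finset.range_subset_range.2 h)

lemma self_le_psum {ℓ : ℕ → ℕ} (hℓ : ∀ t, 1 ≤ ℓ t) (t : ℕ) : t ≤ psum ℓ t := by
  calc t = ∑ _v ∈ Finset.range t, 1 := by simp
  _ ≤ psum ℓ t := Finset.sum_le_sum fun i _ => hℓ i

lemma exists_part {ℓ : ℕ → ℕ} (hℓ : ∀ t, 1 ≤ ℓ t) (M : ℕ) : ∃ t, M < psum ℓ (t+1) :=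
  ⟨M, lt_of_lt_of_le (Nat.lt_succ_self M) (self_le_psum hℓ (M+1))⟩

/-- index of the block containing M -/
def part (ℓ : ℕ → ℕ) (hℓ : ∀ t, 1 ≤ ℓ t) (M : ℕ) : ℕ := Nat.find (exists_part hℓ M)

lemma lt_psum_part_succ (ℓ : ℕ → ℕ) (hℓ : ∀ t, 1 ≤ ℓ t) (M : ℕ) :
    M < psum ℓ (part ℓ hℓ M + 1) := Nat.find_spec (exists_part hℓ M)

lemma le_part_iff (ℓ : ℕ → ℕ) (hℓ : ∀ t, 1 ≤ ℓ t) (M t : ℕ) :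
    t ≤ part ℓ hℓ M ↔ psum ℓ t ≤ M := by
  constructor
  · intro h
    cases t with
    | zero => simp [psum_zero]
    | succ s =>
      have hs : s < part ℓ hℓ M := h
      have := Nat.find_min (exists_part hℓ M) hs
      omega
  · intro h
    by_contra hc
    push_neg at hc
    have h2 := lt_psum_part_succ ℓ hℓ M
    have h3 : psum ℓ (part ℓ hℓ M + 1) ≤ psum ℓ t := psum_mono ℓ (by omega)
    omega

lemma psum_part_le (ℓ : ℕ → ℕ) (hℓ : ∀ t, 1 ≤ ℓ t) (M : ℕ) :
    psum ℓ (part ℓ hℓ M) ≤ M :=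
  (le_part_iff ℓ hℓ M _).1 le_rfl

lemma part_lt_iff (ℓ : ℕ → ℕ) (hℓ : ∀ t, 1 ≤ ℓ t) (M t : ℕ) :
    part ℓ hℓ M < t ↔ M < psum ℓ t := by
  rw [← not_le, ← not_le, le_part_iff]

lemma part_eq (ℓ : ℕ → ℕ) (hℓ : ∀ t, 1 ≤ ℓ t) {M t : ℕ}
    (h1 : psum ℓ t ≤ M) (h2 : M < psum ℓ (t+1)) : part ℓ hℓ M = t := by
  have a1 := (le_part_iff ℓ hℓ M t).2 h1
  have a2 := (part_lt_iff ℓ hℓ M (t+1)).2 h2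
  omega

lemma part_psum_add (ℓ : ℕ → ℕ) (hℓ : ∀ t, 1 ≤ ℓ t) {u q : ℕ} (hq : q < ℓ u) :
    part ℓ hℓ (psum ℓ u + q) = u :=
  part_eq ℓ hℓ (Nat.le_add_right _ _) (by rw [psum_succ]; omega)

lemma part_tendsto (ℓ : ℕ → ℕ) (hℓ : ∀ t, 1 ≤ ℓ t) :
    Tendsto (part ℓ hℓ) atTop atTop := by
  apply tendsto_atTop_atTop.2
  intro b
  exact ⟨psum ℓ b, fun M hM => (le_part_iff ℓ hℓ M b).2 hM⟩

lemma sum_psum {β : Type*} [AddCommMonoid β] (ℓ : ℕ → ℕ) (F : ℕ → β) (t : ℕ) :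
    ∑ M ∈ Finset.range (psum ℓ t), F M
      = ∑ u ∈ Finset.range t, ∑ q ∈ Finset.range (ℓ u), F (psum ℓ u + q) := by
  induction t with
  | zero => simp [psum_zero]
  | succ t ih =>
    rw [psum_succ, Finset.sum_range_add, ih, Finset.sum_range_succ]

lemma sum_part {β : Type*} [AddCommMonoid β] (ℓ : ℕ → ℕ) (hℓ : ∀ t, 1 ≤ ℓ t)
    (H : ℕ → β) (t : ℕ) :
    ∑ q ∈ Finset.range (psum ℓ t), H (part ℓ hℓ q) = ∑ j ∈ Finset.range t, ℓ j • H j := by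
  rw [sum_psum]
  refine Finset.sum_congr rfl fun j _ => ?_
  calc ∑ q ∈ Finset.range (ℓ j), H (part ℓ hℓ (psum ℓ j + q))
      = ∑ _q ∈ Finset.range (ℓ j), H j :=
        Finset.sum_congr rfl fun q hq => by
          rw [part_psum_add ℓ hℓ (Finset.mem_range.1 hq)]
  _ = ℓ j • H j := by rw [Finset.sum_const, Finset.card_range]

lemma wavg {w α : ℕ → ℝ} {I : ℝ} (hw : ∀ u, 1 ≤ w u)
    (hα : Tendsto α atTop (𝓝 I)) :
    Tendsto (fun t : ℕ => (∑ u ∈ range t, w u * α u) / (∑ u ∈ range t, w u))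
      atTop (𝓝 I) := by
  have hwpos : ∀ u, (0:ℝ) < w u := fun u => lt_of_lt_of_le one_pos (hw u)
  have hWt : ∀ t : ℕ, (t : ℝ) ≤ ∑ u ∈ range t, w u := by
    intro t
    calc (t:ℝ) = ∑ _u ∈ range t, (1:ℝ) := by simp
    _ ≤ _ := Finset.sum_le_sum fun i _ => hw i
  rw [Metric.tendsto_atTop] at hα ⊢
  intro ε hε
  obtain ⟨u0, hu0⟩ := hα (ε/2) (by positivity)
  set K := ∑ u ∈ range u0, w u * |α u - I| with hK
  have hK0 : 0 ≤ K :=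
    Finset.sum_nonneg fun i _ => mul_nonneg (hwpos i).le (abs_nonneg _)
  refine ⟨max u0 (⌈2*K/ε⌉₊ + 1), fun t ht => ?_⟩
  have htu0 : u0 ≤ t := le_trans (le_max_left _ _) ht
  have ht1 : (⌈2*K/ε⌉₊ + 1 : ℕ) ≤ t := le_trans (le_max_right _ _) ht
  set W := ∑ u ∈ range t, w u with hWdef
  have hWbig : 2*K/ε < W := by
    have h1 : (2*K/ε) < (⌈2*K/ε⌉₊ + 1 : ℕ) := by
      push_cast
      exact lt_of_le_of_lt (Nat.le_ceil _) (by norm_num)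
    exact lt_of_lt_of_le h1 (le_trans (Nat.cast_le.2 ht1) (hWt t))
  have hWpos : (0:ℝ) < W := lt_of_le_of_lt (by positivity) hWbig
  have hKW : K < ε/2 * W := by
    rw [div_lt_iff₀ hε] at hWbig
    linarith
  rw [Real.dist_eq]
  have hnum : (∑ u ∈ range t, w u * α u) - I * W = ∑ u ∈ range t, w u * (α u - I) := by
    rw [hWdef, Finset.mul_sum, ← Finset.sum_sub_distrib]
    exact Finset.sum_congr rfl fun i _ => by ring
  have habs : |∑ u ∈ range t, w u * (α u - I)| ≤ K + ε/2 * W := by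
    calc |∑ u ∈ range t, w u * (α u - I)| ≤ ∑ u ∈ range t, |w u * (α u - I)| :=
          Finset.abs_sum_le_sum_abs _ _
    _ = ∑ u ∈ range t, w u * |α u - I| :=
          Finset.sum_congr rfl fun i _ => by rw [abs_mul, abs_of_pos (hwpos i)]
    _ = K + ∑ u ∈ Finset.Ico u0 t, w u * |α u - I| :=
          (Finset.sum_range_add_sum_Ico _ htu0).symm
    _ ≤ K + ∑ u ∈ Finset.Ico u0 t, w u * (ε/2) := by
          refine add_le_add_right (Finset.sum_le_sum fun i hi => ?_) K
          refine mul_le_mul_of_nonneg_left ?_ (hwpos i).le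
          have := hu0 i (Finset.mem_Ico.1 hi).1
          rw [Real.dist_eq] at this
          exact this.le
    _ = K + (ε/2) * ∑ u ∈ Finset.Ico u0 t, w u := by rw [← Finset.sum_mul]; ring
    _ ≤ K + (ε/2) * W := by
          refine add_le_add_right (mul_le_mul_of_nonneg_left ?_ (by positivity)) K
          rw [hWdef, Finset.range_eq_Ico]
          exact Finset.sum_le_sum_of_subset_of_nonneg
            (Finset.Ico_subset_Ico (Nat.zero_le _) le_rfl)
            (fun i _ _ => (hwpos i).le)
  have heq : (∑ u ∈ range t, w u * α u) / W - I
      = ((∑ u ∈ range t, w u * α u) - I * W) / W := by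
    field_simp
  rw [heq, abs_div, abs_of_pos hWpos, div_lt_iff₀ hWpos, hnum]
  calc |∑ u ∈ range t, w u * (α u - I)| ≤ K + ε/2 * W := habs
  _ < ε/2 * W + ε/2 * W := by linarith
  _ = ε * W := by ring


lemma cutlem {e s : ℕ → ℝ} {ℓ : ℕ → ℕ} (hℓ : ∀ t, 1 ≤ ℓ t) {I B : ℝ}
    (he : ∀ M, 1 ≤ e M) (hs : ∀ M, |s M| ≤ B * e M)
    (hA : Tendsto (fun t => (∑ M ∈ range (psum ℓ t), s M) /
            (∑ M ∈ range (psum ℓ t), e M)) atTop (𝓝 I))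
    (hR : Tendsto (fun t => (∑ M ∈ range (psum ℓ (t+1)), e M) /
            (∑ M ∈ range (psum ℓ t), e M)) atTop (𝓝 1)) :
    Tendsto (fun n => (∑ M ∈ range n, s M) / (∑ M ∈ range n, e M)) atTop (𝓝 I) := by
  set E : ℕ → ℝ := fun n => ∑ M ∈ range n, e M with hE
  set A : ℕ → ℝ := fun n => ∑ M ∈ range n, s M with hA'
  have hepos : ∀ M, (0:ℝ) < e M := fun M => lt_of_lt_of_le one_pos (he M)
  have hEn : ∀ n : ℕ, (n:ℝ) ≤ E n := by
    intro n
    calc (n:ℝ) = ∑ _M ∈ range n, (1:ℝ) := by simp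
    _ ≤ E n := Finset.sum_le_sum fun i _ => he i
  have hEmono : ∀ {m n : ℕ}, m ≤ n → E m ≤ E n := by
    intro m n h
    rw [hE]
    simp only
    refine Finset.sum_le_sum_of_subset_of_nonneg
      (Finset.range_subset_range.2 h) (fun i _ _ => (hepos i).le)
  have hEpos : ∀ {n : ℕ}, 1 ≤ n → (0:ℝ) < E n := by
    intro n hn
    exact lt_of_lt_of_le (by exact_mod_cast hn : (0:ℝ) < (n:ℝ)) (hEn n)
  -- g : error bound at block t
  set g : ℕ → ℝ := fun t =>
    (|A (psum ℓ t) - I * E (psum ℓ t)|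
      + (B + |I|) * (E (psum ℓ (t+1)) - E (psum ℓ t))) / E (psum ℓ t) with hg'
  have hEσpos : ∀ {t : ℕ}, 1 ≤ t → (0:ℝ) < E (psum ℓ t) := by
    intro t ht
    exact hEpos (le_trans ht (self_le_psum hℓ t))
  have hgza : Tendsto g atTop (𝓝 0) := by
    have h1 : Tendsto (fun t => |A (psum ℓ t) / E (psum ℓ t) - I|) atTop (𝓝 0) := by
      have := (hA.sub (tendsto_const_nhds (x := I))).abs
      simpa using this
    have h2 : Tendsto (fun t => (B + |I|) *
        (E (psum ℓ (t+1)) / E (psum ℓ t) - 1)) atTop (𝓝 0) := by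
      have := ((hR.sub (tendsto_const_nhds (x := (1:ℝ)))).const_mul (B + |I|))
      simpa using this
    have h3 := h1.add h2
    rw [add_zero] at h3
    refine h3.congr' ?_
    filter_upwards [eventually_ge_atTop 1] with t ht
    have hpos := hEσpos ht
    rw [hg']
    simp only
    rw [add_div]
    congr 1
    · have h4 : A (psum ℓ t) / E (psum ℓ t) - I
          = (A (psum ℓ t) - I * E (psum ℓ t)) / E (psum ℓ t) := by
        field_simp
      rw [h4, abs_div, abs_of_pos hpos]
    · rw [mul_div_assoc]
      congr 1
      field_simp
  -- key pointwise bound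
  have key : ∀ n : ℕ, psum ℓ 1 ≤ n → |A n / E n - I| ≤ g (part ℓ hℓ n) := by
    intro n hn
    set t := part ℓ hℓ n with htdef
    have ht1 : 1 ≤ t := (le_part_iff ℓ hℓ n 1).2 hn
    have hσle : psum ℓ t ≤ n := psum_part_le ℓ hℓ n
    have hσlt : n < psum ℓ (t+1) := lt_psum_part_succ ℓ hℓ n
    have hEσ : (0:ℝ) < E (psum ℓ t) := hEσpos ht1
    have hEnpos : (0:ℝ) < E n := lt_of_lt_of_le hEσ (hEmono hσle)
    have hsplitA : A n = A (psum ℓ t) + ∑ M ∈ Finset.Ico (psum ℓ t) n, s M :=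
      (Finset.sum_range_add_sum_Ico _ hσle).symm
    have hsplitE : E n = E (psum ℓ t) + ∑ M ∈ Finset.Ico (psum ℓ t) n, e M :=
      (Finset.sum_range_add_sum_Ico _ hσle).symm
    have hmid : |∑ M ∈ Finset.Ico (psum ℓ t) n, (s M - I * e M)|
        ≤ (B + |I|) * (E (psum ℓ (t+1)) - E (psum ℓ t)) := by
      have hBI : ∀ M, |s M - I * e M| ≤ (B + |I|) * e M := by
        intro M
        calc |s M - I * e M| ≤ |s M| + |I * e M| := abs_sub _ _
        _ ≤ B * e M + |I| * e M := by
            refine add_le_add (hs M) ?_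
            rw [abs_mul, abs_of_pos (hepos M)]
        _ = (B + |I|) * e M := by ring
      calc |∑ M ∈ Finset.Ico (psum ℓ t) n, (s M - I * e M)|
          ≤ ∑ M ∈ Finset.Ico (psum ℓ t) n, |s M - I * e M| :=
            Finset.abs_sum_le_sum_abs _ _
      _ ≤ ∑ M ∈ Finset.Ico (psum ℓ t) n, (B + |I|) * e M :=
            Finset.sum_le_sum fun i _ => hBI i
      _ = (B + |I|) * ∑ M ∈ Finset.Ico (psum ℓ t) n, e M := by
            rw [Finset.mul_sum]
      _ ≤ (B + |I|) * ∑ M ∈ Finset.Ico (psum ℓ t) (psum ℓ (t+1)), e M := by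
            have hBI0 : 0 ≤ B + |I| := by
              have h0 := hs 0
              have h1 := abs_nonneg (s 0)
              have h2 := hepos 0
              have h3 := abs_nonneg I
              nlinarith
            refine mul_le_mul_of_nonneg_left ?_ hBI0
            exact Finset.sum_le_sum_of_subset_of_nonneg
              (Finset.Ico_subset_Ico le_rfl hσlt.le) (fun i _ _ => (hepos i).le)
      _ = (B + |I|) * (E (psum ℓ (t+1)) - E (psum ℓ t)) := by
            congr 1
            have := Finset.sum_range_add_sum_Ico e (psum_mono ℓ (Nat.le_succ t))
            rw [hE]
            simp only
            linarith [this]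
    have hnum : |A n - I * E n|
        ≤ |A (psum ℓ t) - I * E (psum ℓ t)|
          + (B + |I|) * (E (psum ℓ (t+1)) - E (psum ℓ t)) := by
      have heq2 : A n - I * E n = (A (psum ℓ t) - I * E (psum ℓ t))
          + ∑ M ∈ Finset.Ico (psum ℓ t) n, (s M - I * e M) := by
        rw [hsplitA, hsplitE]
        have hq : ∑ M ∈ Finset.Ico (psum ℓ t) n, (s M - I * e M)
            = (∑ M ∈ Finset.Ico (psum ℓ t) n, s M)
              - I * ∑ M ∈ Finset.Ico (psum ℓ t) n, e M := by
          rw [Finset.sum_sub_distrib, Finset.mul_sum]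
        rw [hq]
        ring
      rw [heq2]
      exact le_trans (abs_add_le _ _) (add_le_add_right hmid _)
    have heq3 : |A n / E n - I| = |A n - I * E n| / E n := by
      have h4 : A n / E n - I = (A n - I * E n) / E n := by
        field_simp
      rw [h4, abs_div, abs_of_pos hEnpos]
    rw [heq3, hg']
    simp only
    refine div_le_div₀ ?_ hnum hEσ (hEmono hσle)
    have h1 : (0:ℝ) ≤ |A (psum ℓ t) - I * E (psum ℓ t)| := abs_nonneg _
    have h2 : (0:ℝ) ≤ (B + |I|) * (E (psum ℓ (t+1)) - E (psum ℓ t)) :=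
      le_trans (abs_nonneg _) hmid
    linarith
  -- conclude
  have hgpart : Tendsto (fun n => g (part ℓ hℓ n)) atTop (𝓝 0) :=
    hgza.comp (part_tendsto ℓ hℓ)
  have habs0 : Tendsto (fun n => |A n / E n - I|) atTop (𝓝 0) := by
    refine squeeze_zero' (Eventually.of_forall fun n => abs_nonneg _) ?_ hgpart
    filter_upwards [eventually_ge_atTop (psum ℓ 1)] with n hn
    exact key n hn
  rw [tendsto_iff_dist_tendsto_zero]
  simpa [Real.dist_eq] using habs0
def nup (W : ℕ → ℕ) : ℕ → ℕ × ℕ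
  | 0 => (0, 0)
  | u+1 =>
    let p := nup W u
    let c' := p.2 + W p.1
    (if W (p.1 + 1) * (p.1 + 2) ≤ c' then p.1 + 1 else p.1, c')

def nu (W : ℕ → ℕ) (u : ℕ) : ℕ := (nup W u).1
def cum (W : ℕ → ℕ) (u : ℕ) : ℕ := (nup W u).2

lemma cum_succ (W : ℕ → ℕ) (u : ℕ) : cum W (u+1) = cum W u + W (nu W u) := by
  simp [cum, nu, nup]

lemma nu_succ (W : ℕ → ℕ) (u : ℕ) :
    nu W (u+1) = if W (nu W u + 1) * (nu W u + 2) ≤ cum W u + W (nu W u)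
      then nu W u + 1 else nu W u := by
  rfl

lemma cum_spec (W : ℕ → ℕ) (u : ℕ) : cum W u = ∑ v ∈ range u, W (nu W v) := by
  induction u with
  | zero => simp [cum, nup]
  | succ u ih => rw [cum_succ, ih, Finset.sum_range_succ]

lemma nu_zero (W : ℕ → ℕ) : nu W 0 = 0 := rfl

lemma nu_stay_or (W : ℕ → ℕ) (u : ℕ) :
    nu W (u+1) = nu W u ∨ nu W (u+1) = nu W u + 1 := by
  rw [nu_succ]
  split <;> simp

lemma nu_mono (W : ℕ → ℕ) : Monotone (nu W) := by
  apply monotone_nat_of_le_succ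
  intro u
  rcases nu_stay_or W u with h | h <;> omega

lemma nu_const_cum (W : ℕ → ℕ) (u : ℕ) : ∀ r : ℕ,
    (nu W (u+r) = nu W u ∧ cum W (u+r) = cum W u + r * W (nu W u))
      ∨ nu W u < nu W (u+r) := by
  intro r
  induction r with
  | zero => left; simp
  | succ r ih =>
    rcases ih with ⟨h1, h2⟩ | h
    · rcases nu_stay_or W (u+r) with h3 | h3
      · left
        constructor
        · rw [← Nat.add_assoc, h3, h1]
        · rw [← Nat.add_assoc, cum_succ, h2, h1]; ring
      · right
        rw [← Nat.add_assoc, h3, h1]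
        omega
    · right
      exact lt_of_lt_of_le h (nu_mono W (by omega : u + r ≤ u + (r+1)))

lemma nu_escape (W : ℕ → ℕ) (hW : ∀ N, 1 ≤ W N) (u : ℕ) :
    ∃ u', nu W u < nu W u' := by
  set n := nu W u with hn
  set r := W (n + 1) * (n + 2) with hr
  rcases nu_const_cum W u r with ⟨h1, h2⟩ | h
  · refine ⟨u + r + 1, ?_⟩
    have hguard : W (nu W (u+r) + 1) * (nu W (u+r) + 2)
        ≤ cum W (u+r) + W (nu W (u+r)) := by
      rw [h1, h2]
      have h4 : r ≤ r * W n := Nat.le_mul_of_pos_right r (hW n)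
      calc W (nu W u + 1) * (nu W u + 2) = r := hr.symm
      _ ≤ r * W n := h4
      _ ≤ cum W u + r * W (nu W u) + W (nu W u) := by
          rw [← hn]
          omega
    rw [nu_succ]
    rw [if_pos hguard, h1]
    omega
  · exact ⟨u + r, h⟩

lemma nu_tendsto (W : ℕ → ℕ) (hW : ∀ N, 1 ≤ W N) :
    Tendsto (nu W) atTop atTop := by
  refine tendsto_atTop_atTop_of_monotone (nu_mono W) ?_
  intro b
  induction b with
  | zero => exact ⟨0, Nat.zero_le _⟩
  | succ b ih =>
    obtain ⟨a, ha⟩ := ih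
    obtain ⟨a', ha'⟩ := nu_escape W hW a
    exact ⟨a', by omega⟩

lemma nu_inv (W : ℕ → ℕ) (hW : ∀ N, 1 ≤ W N) :
    ∀ t : ℕ, 1 ≤ t → W (nu W t) * (nu W t + 1) ≤ cum W t := by
  intro t ht
  induction t with
  | zero => omega
  | succ t ih =>
    rcases Nat.eq_zero_or_pos t with rfl | ht0
    · have hn := nu_succ W 0
      have hc := cum_succ W 0
      rw [nu_zero] at hn hc
      split_ifs at hn with h
      · rw [hn, hc]; exact h
      · rw [hn, hc]; simp
    · have ih' := ih ht0
      rw [nu_succ, cum_succ]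
      split_ifs with h
      · exact h
      · exact le_trans ih' (Nat.le_add_right _ _)

end Stmt2Aux


open Filter Topology MeasureTheory Stmt2Aux

/-- From an equidistributed sequence of orbit sets (weighted finite collections of
periodic orbits) one can extract a sequence of genuine periodic orbits whose Cesàro
averages equidistribute (Corollary 1.4 of the paper). -/
theorem stmt_2 {X : Type*} [TopologicalSpace X] [CompactSpace X]
    [TopologicalSpace.MetrizableSpace X]
    [MeasurableSpace X] [BorelSpace X]
    (φ : X → X) (hφ : Continuous φ)
    (μ : Measure X) [IsProbabilityMeasure μ]
    (k : ℕ → ℕ) (x : ℕ → ℕ → X) (d : ℕ → ℕ → ℕ) (a : ℕ → ℕ → ℝ)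
    (hk : ∀ N, 1 ≤ k N)
    (hd : ∀ N j, j < k N → 1 ≤ d N j)
    (hper : ∀ N j, j < k N → φ^[d N j] (x N j) = x N j)
    (ha : ∀ N j, j < k N → 0 < a N j)
    (hequi : ∀ f : X → ℝ, Continuous f →
      Tendsto (fun N =>
          (∑ j ∈ Finset.range (k N),
              a N j * ∑ i ∈ Finset.range (d N j), f (φ^[i] (x N j))) /
          (∑ j ∈ Finset.range (k N), a N j * (d N j : ℝ)))
        atTop (𝓝 (∫ y, f y ∂μ))) :
    ∃ (y : ℕ → X) (e : ℕ → ℕ),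
      (∀ M, 1 ≤ e M) ∧ (∀ M, φ^[e M] (y M) = y M) ∧
      ∀ f : X → ℝ, Continuous f →
        Tendsto (fun N =>
            (∑ M ∈ Finset.range N, ∑ i ∈ Finset.range (e M), f (φ^[i] (y M))) /
            (∑ M ∈ Finset.range N, (e M : ℝ)))
          atTop (𝓝 (∫ y, f y ∂μ)) := by
  classical
  -- basic quantities
  set D' : ℕ → ℕ := fun N => ∑ j ∈ Finset.range (k N), d N j with hD'def
  set Dr : ℕ → ℝ := fun N => ∑ j ∈ Finset.range (k N), a N j * (d N j : ℝ) with hDrdef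
  have hD'1 : ∀ N, 1 ≤ D' N := by
    intro N
    calc (1:ℕ) ≤ k N := hk N
    _ = ∑ _j ∈ Finset.range (k N), 1 := by simp
    _ ≤ D' N := Finset.sum_le_sum fun j hj => hd N j (Finset.mem_range.1 hj)
  have hDrpos : ∀ N, 0 < Dr N := by
    intro N
    refine Finset.sum_pos (fun j hj => ?_) ⟨0, Finset.mem_range.2 (hk N)⟩
    have hj' := Finset.mem_range.1 hj
    have h1 : (0:ℝ) < (d N j : ℝ) := by exact_mod_cast hd N j hj'
    exact mul_pos (ha N j hj') h1
  set C : ℕ → ℝ := fun N => ((N : ℝ) + 1) * (D' N : ℝ) / Dr N with hCdef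
  have hCpos : ∀ N, 0 < C N := by
    intro N
    apply div_pos _ (hDrpos N)
    have h1 : (0:ℝ) < (D' N : ℝ) := by exact_mod_cast hD'1 N
    positivity
  set m : ℕ → ℕ → ℕ := fun N j => if j < k N then ⌈C N * a N j⌉₊ else 1 with hmdef
  have hm1 : ∀ N, ∀ j, 1 ≤ m N j := by
    intro N j
    simp only [hmdef]
    split_ifs with h
    · exact Nat.ceil_pos.2 (mul_pos (hCpos N) (ha N j h))
    · exact le_rfl
  have hmge : ∀ N j, j < k N → C N * a N j ≤ (m N j : ℝ) := by
    intro N j h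
    simp only [hmdef]
    simp only [if_pos h]
    exact Nat.le_ceil _
  have hmle : ∀ N j, j < k N → (m N j : ℝ) ≤ C N * a N j + 1 := by
    intro N j h
    simp only [hmdef]
    simp only [if_pos h]
    have h0 : (0:ℝ) ≤ C N * a N j := (mul_pos (hCpos N) (ha N j h)).le
    exact (Nat.ceil_lt_add_one h0).le
  set W : ℕ → ℕ := fun N => ∑ j ∈ Finset.range (k N), m N j * d N j with hWdef
  have hW1 : ∀ N, 1 ≤ W N := by
    intro N
    calc (1:ℕ) ≤ k N := hk N
    _ = ∑ _j ∈ Finset.range (k N), 1 := by simp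
    _ ≤ W N := Finset.sum_le_sum fun j hj =>
        Nat.one_le_iff_ne_zero.2 (Nat.mul_ne_zero
          (Nat.one_le_iff_ne_zero.1 (hm1 N j))
          (Nat.one_le_iff_ne_zero.1 (hd N j (Finset.mem_range.1 hj))))
  set ν : ℕ → ℕ := nu W with hνdef
  set ℓg : ℕ → ℕ := fun u => psum (m (ν u)) (k (ν u)) with hℓgdef
  have hℓ1 : ∀ u, 1 ≤ ℓg u := by
    intro u
    simp only [hℓgdef]
    calc 1 ≤ k (ν u) := hk _
    _ ≤ psum (m (ν u)) (k (ν u)) := self_le_psum (hm1 (ν u)) _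
  set jj : ℕ → ℕ := fun M =>
    part (m (ν (part ℓg hℓ1 M))) (hm1 (ν (part ℓg hℓ1 M)))
      (M - psum ℓg (part ℓg hℓ1 M)) with hjjdef
  set y : ℕ → X := fun M => x (ν (part ℓg hℓ1 M)) (jj M) with hydef
  set e : ℕ → ℕ := fun M => d (ν (part ℓg hℓ1 M)) (jj M) with hedef
  have hjlt : ∀ M, jj M < k (ν (part ℓg hℓ1 M)) := by
    intro M
    have h1 : M - psum ℓg (part ℓg hℓ1 M) < ℓg (part ℓg hℓ1 M) := by
      have h2 := psum_part_le ℓg hℓ1 M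
      have h3 := lt_psum_part_succ ℓg hℓ1 M
      rw [psum_succ] at h3
      omega
    simp only [hjjdef]
    exact (part_lt_iff _ (hm1 _) _ _).2 h1
  have hE1 : ∀ M, 1 ≤ e M := fun M => hd _ _ (hjlt M)
  refine ⟨y, e, hE1, fun M => hper _ _ (hjlt M), ?_⟩
  intro f hf
  -- bound on f
  obtain ⟨B0, hB0⟩ := isCompact_univ.exists_bound_of_continuousOn hf.continuousOn
  set B : ℝ := max B0 0 with hBdef
  have hB : ∀ z : X, |f z| ≤ B := by
    intro z
    have h1 := hB0 z (Set.mem_univ z)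
    rw [Real.norm_eq_abs] at h1
    exact le_trans h1 (le_max_left _ _)
  have hBnn : (0:ℝ) ≤ B := le_max_right _ _
  -- orbit sums
  set S : ℕ → ℕ → ℝ := fun N j => ∑ i ∈ Finset.range (d N j), f (φ^[i] (x N j)) with hSdef
  set Z : ℕ → ℝ := fun N => ∑ j ∈ Finset.range (k N), (m N j : ℝ) * S N j with hZdef
  set AA : ℕ → ℝ := fun N => ∑ j ∈ Finset.range (k N), a N j * S N j with hAAdef
  set sfn : ℕ → ℝ := fun M => ∑ i ∈ Finset.range (e M), f (φ^[i] (y M)) with hsfndef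
  have hSb : ∀ N j, |S N j| ≤ B * (d N j : ℝ) := by
    intro N j
    simp only [hSdef]
    calc |∑ i ∈ Finset.range (d N j), f (φ^[i] (x N j))|
        ≤ ∑ i ∈ Finset.range (d N j), |f (φ^[i] (x N j))| :=
          Finset.abs_sum_le_sum_abs _ _
    _ ≤ ∑ _i ∈ Finset.range (d N j), B := Finset.sum_le_sum fun i _ => hB _
    _ = (d N j : ℝ) * B := by rw [Finset.sum_const, Finset.card_range, nsmul_eq_mul]
    _ = B * (d N j : ℝ) := mul_comm _ _
  have hsb : ∀ M, |sfn M| ≤ B * ((e M : ℕ) : ℝ) := by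
    intro M
    simp only [hsfndef]
    calc |∑ i ∈ Finset.range (e M), f (φ^[i] (y M))|
        ≤ ∑ i ∈ Finset.range (e M), |f (φ^[i] (y M))| := Finset.abs_sum_le_sum_abs _ _
    _ ≤ ∑ _i ∈ Finset.range (e M), B := Finset.sum_le_sum fun i _ => hB _
    _ = ((e M : ℕ) : ℝ) * B := by rw [Finset.sum_const, Finset.card_range, nsmul_eq_mul]
    _ = B * ((e M : ℕ) : ℝ) := mul_comm _ _
  -- pointwise identification within a block
  have hpt : ∀ u q, q < ℓg u →
      y (psum ℓg u + q) = x (ν u) (part (m (ν u)) (hm1 (ν u)) q) ∧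
      e (psum ℓg u + q) = d (ν u) (part (m (ν u)) (hm1 (ν u)) q) := by
    intro u q hq
    have h1 : part ℓg hℓ1 (psum ℓg u + q) = u := part_psum_add ℓg hℓ1 hq
    have h2 : jj (psum ℓg u + q) = part (m (ν u)) (hm1 (ν u)) q := by
      simp only [hjjdef]
      simp only [h1, Nat.add_sub_cancel_left]
    constructor
    · simp only [hydef]; simp only [h1, h2]
    · simp only [hedef]; simp only [h1, h2]
  -- block sums
  have hblockE : ∀ t, ∑ M ∈ Finset.range (psum ℓg t), ((e M : ℕ) : ℝ)
      = ∑ u ∈ Finset.range t, ((W (ν u) : ℕ) : ℝ) := by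
    intro t
    rw [sum_psum]
    refine Finset.sum_congr rfl fun u _ => ?_
    calc ∑ q ∈ Finset.range (ℓg u), ((e (psum ℓg u + q) : ℕ) : ℝ)
        = ∑ q ∈ Finset.range (ℓg u),
            ((d (ν u) (part (m (ν u)) (hm1 (ν u)) q) : ℕ) : ℝ) :=
          Finset.sum_congr rfl fun q hq => by
            rw [(hpt u q (Finset.mem_range.1 hq)).2]
    _ = ∑ j ∈ Finset.range (k (ν u)), m (ν u) j • ((d (ν u) j : ℕ) : ℝ) := by
          have hrfl : ℓg u = psum (m (ν u)) (k (ν u)) := rfl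
          rw [hrfl]
          exact sum_part (m (ν u)) (hm1 (ν u)) (fun j => ((d (ν u) j : ℕ) : ℝ)) (k (ν u))
    _ = ((W (ν u) : ℕ) : ℝ) := by
          simp only [hWdef]
          push_cast
          exact Finset.sum_congr rfl fun j _ => by rw [nsmul_eq_mul]
  have hblockS : ∀ t, ∑ M ∈ Finset.range (psum ℓg t), sfn M
      = ∑ u ∈ Finset.range t, Z (ν u) := by
    intro t
    rw [sum_psum]
    refine Finset.sum_congr rfl fun u _ => ?_
    calc ∑ q ∈ Finset.range (ℓg u), sfn (psum ℓg u + q)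
        = ∑ q ∈ Finset.range (ℓg u), S (ν u) (part (m (ν u)) (hm1 (ν u)) q) := by
          refine Finset.sum_congr rfl fun q hq => ?_
          obtain ⟨hy1, he1⟩ := hpt u q (Finset.mem_range.1 hq)
          simp only [hsfndef, hSdef]
          simp only [hy1, he1]
    _ = ∑ j ∈ Finset.range (k (ν u)), m (ν u) j • S (ν u) j := by
          have hrfl : ℓg u = psum (m (ν u)) (k (ν u)) := rfl
          rw [hrfl]
          exact sum_part (m (ν u)) (hm1 (ν u)) (S (ν u)) (k (ν u))
    _ = Z (ν u) := by
          simp only [hZdef]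
          exact Finset.sum_congr rfl fun j _ => by rw [nsmul_eq_mul]
  -- casts and positivity
  have hWposR : ∀ N, (0:ℝ) < ((W N : ℕ) : ℝ) := fun N => by exact_mod_cast hW1 N
  have hD'posR : ∀ N, (0:ℝ) < ((D' N : ℕ) : ℝ) := fun N => by exact_mod_cast hD'1 N
  -- W ≥ (N+1) D'   and   W ≤ C Dr + D'
  have hCDr : ∀ N, C N * Dr N = ((N:ℝ)+1) * (D' N : ℝ) := by
    intro N
    simp only [hCdef]
    rw [div_mul_cancel₀ _ (hDrpos N).ne']
  have hWge : ∀ N : ℕ, ((N:ℝ)+1) * (D' N : ℝ) ≤ ((W N : ℕ) : ℝ) := by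
    intro N
    rw [← hCDr N]
    calc C N * Dr N = ∑ j ∈ Finset.range (k N), C N * (a N j * (d N j : ℝ)) := by
          simp only [hDrdef]
          rw [Finset.mul_sum]
    _ ≤ ∑ j ∈ Finset.range (k N), (m N j : ℝ) * (d N j : ℝ) := by
          refine Finset.sum_le_sum fun j hj => ?_
          have hj' := Finset.mem_range.1 hj
          have h1 := hmge N j hj'
          have h2 : (0:ℝ) ≤ (d N j : ℝ) := Nat.cast_nonneg _
          calc C N * (a N j * (d N j : ℝ)) = (C N * a N j) * (d N j : ℝ) := by ring
          _ ≤ (m N j : ℝ) * (d N j : ℝ) := mul_le_mul_of_nonneg_right h1 h2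
    _ = ((W N : ℕ) : ℝ) := by simp only [hWdef]; push_cast; rfl
  have hWle : ∀ N, ((W N : ℕ) : ℝ) ≤ C N * Dr N + (D' N : ℝ) := by
    intro N
    have h1 : ((W N : ℕ) : ℝ) = ∑ j ∈ Finset.range (k N), (m N j : ℝ) * (d N j : ℝ) := by
      simp only [hWdef]; push_cast; rfl
    have h2 : C N * Dr N + (D' N : ℝ)
        = ∑ j ∈ Finset.range (k N), ((C N * a N j) * (d N j : ℝ) + (d N j : ℝ)) := by
      simp only [hDrdef, hD'def]
      rw [Finset.sum_add_distrib, Finset.mul_sum]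
      push_cast
      congr 1
      exact Finset.sum_congr rfl fun j _ => by ring
    rw [h1, h2]
    refine Finset.sum_le_sum fun j hj => ?_
    have hj' := Finset.mem_range.1 hj
    have h3 := hmle N j hj'
    have h4 : (0:ℝ) ≤ (d N j : ℝ) := Nat.cast_nonneg _
    nlinarith
  -- |Z - C AA| ≤ B D'
  have hZA : ∀ N, |Z N - C N * AA N| ≤ B * (D' N : ℝ) := by
    intro N
    have h1 : Z N - C N * AA N
        = ∑ j ∈ Finset.range (k N), ((m N j : ℝ) - C N * a N j) * S N j := by
      simp only [hZdef, hAAdef]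
      rw [Finset.mul_sum, ← Finset.sum_sub_distrib]
      exact Finset.sum_congr rfl fun j _ => by ring
    rw [h1]
    calc |∑ j ∈ Finset.range (k N), ((m N j : ℝ) - C N * a N j) * S N j|
        ≤ ∑ j ∈ Finset.range (k N), |((m N j : ℝ) - C N * a N j) * S N j| :=
          Finset.abs_sum_le_sum_abs _ _
    _ ≤ ∑ j ∈ Finset.range (k N), B * (d N j : ℝ) := by
          refine Finset.sum_le_sum fun j hj => ?_
          have hj' := Finset.mem_range.1 hj
          have h2 : |(m N j : ℝ) - C N * a N j| ≤ 1 := by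
            have := hmge N j hj'
            have := hmle N j hj'
            rw [abs_le]
            constructor <;> linarith
          rw [abs_mul]
          exact le_trans (mul_le_mul_of_nonneg_right h2 (abs_nonneg _))
            (by rw [one_mul]; exact hSb N j)
    _ = B * (D' N : ℝ) := by simp only [hD'def]; push_cast; rw [Finset.mul_sum]
  -- |AA| ≤ B Dr
  have hAAb : ∀ N, |AA N| ≤ B * Dr N := by
    intro N
    simp only [hAAdef]
    calc |∑ j ∈ Finset.range (k N), a N j * S N j|
        ≤ ∑ j ∈ Finset.range (k N), |a N j * S N j| := Finset.abs_sum_le_sum_abs _ _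
    _ ≤ ∑ j ∈ Finset.range (k N), a N j * (B * (d N j : ℝ)) := by
          refine Finset.sum_le_sum fun j hj => ?_
          have hj' := Finset.mem_range.1 hj
          rw [abs_mul, abs_of_pos (ha N j hj')]
          exact mul_le_mul_of_nonneg_left (hSb N j) (ha N j hj').le
    _ = B * Dr N := by
          simp only [hDrdef]
          rw [Finset.mul_sum]
          exact Finset.sum_congr rfl fun j _ => by ring
  -- main estimate
  have hdiff : ∀ N, |Z N / ((W N : ℕ) : ℝ) - AA N / Dr N| ≤ 2 * B / ((N:ℝ)+1) := by
    intro N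
    have hW0 : ((W N : ℕ) : ℝ) ≠ 0 := (hWposR N).ne'
    have hDr0 : Dr N ≠ 0 := (hDrpos N).ne'
    have heq : Z N / ((W N : ℕ) : ℝ) - AA N / Dr N
        = (Z N * Dr N - AA N * ((W N : ℕ) : ℝ)) / (((W N : ℕ) : ℝ) * Dr N) := by
      field_simp
    have hnum : |Z N * Dr N - AA N * ((W N : ℕ) : ℝ)|
        ≤ 2 * B * (D' N : ℝ) * Dr N := by
      have hsplit : Z N * Dr N - AA N * ((W N : ℕ) : ℝ)
          = (Z N - C N * AA N) * Dr N + AA N * (C N * Dr N - ((W N : ℕ) : ℝ)) := by ring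
      rw [hsplit]
      have hCW : |C N * Dr N - ((W N : ℕ) : ℝ)| ≤ (D' N : ℝ) := by
        have h1 := hWge N
        have h2 := hWle N
        rw [← hCDr N] at h1
        rw [abs_le]
        constructor <;> linarith
      calc |(Z N - C N * AA N) * Dr N + AA N * (C N * Dr N - ((W N : ℕ) : ℝ))|
          ≤ |(Z N - C N * AA N) * Dr N| + |AA N * (C N * Dr N - ((W N : ℕ) : ℝ))| :=
            abs_add_le _ _
      _ ≤ (B * (D' N : ℝ)) * Dr N + (B * Dr N) * (D' N : ℝ) := by
            refine add_le_add ?_ ?_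
            · rw [abs_mul, abs_of_pos (hDrpos N)]
              exact mul_le_mul_of_nonneg_right (hZA N) (hDrpos N).le
            · rw [abs_mul]
              exact mul_le_mul (hAAb N) hCW (abs_nonneg _)
                (mul_nonneg hBnn (hDrpos N).le)
      _ = 2 * B * (D' N : ℝ) * Dr N := by ring
    rw [heq, abs_div, abs_of_pos (mul_pos (hWposR N) (hDrpos N))]
    have h2B0 : (0:ℝ) ≤ 2 * B * (D' N : ℝ) := by
      have := (hD'posR N).le
      nlinarith
    calc |Z N * Dr N - AA N * ((W N : ℕ) : ℝ)| / (((W N : ℕ) : ℝ) * Dr N)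
        ≤ (2 * B * (D' N : ℝ) * Dr N) / (((W N : ℕ) : ℝ) * Dr N) :=
          div_le_div₀ (by nlinarith [(hDrpos N).le]) hnum
            (mul_pos (hWposR N) (hDrpos N)) le_rfl
    _ = (2 * B * (D' N : ℝ)) / ((W N : ℕ) : ℝ) := by
          rw [mul_div_mul_right _ _ hDr0]
    _ ≤ (2 * B * (D' N : ℝ)) / (((N:ℝ)+1) * (D' N : ℝ)) := by
          refine div_le_div_of_nonneg_left h2B0 ?_ (hWge N)
          exact mul_pos (by positivity) (hD'posR N)
    _ = 2 * B / ((N:ℝ)+1) := by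
          have hD0 : ((D' N : ℕ) : ℝ) ≠ 0 := (hD'posR N).ne'
          field_simp
  -- Z/W tends to the integral
  have hN1 : Tendsto (fun N : ℕ => ((N:ℝ)+1)) atTop atTop := by
    apply tendsto_atTop_add_const_right
    exact tendsto_natCast_atTop_atTop
  have h2B : Tendsto (fun N : ℕ => 2 * B / ((N:ℝ)+1)) atTop (𝓝 0) :=
    Tendsto.div_atTop tendsto_const_nhds hN1
  have hAADr : Tendsto (fun N => AA N / Dr N) atTop (𝓝 (∫ y, f y ∂μ)) := hequi f hf
  have h2Bneg : Tendsto (fun N : ℕ => -(2 * B / ((N:ℝ)+1))) atTop (𝓝 0) := by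
    simpa using h2B.neg
  have hd0 : Tendsto (fun N => Z N / ((W N : ℕ) : ℝ) - AA N / Dr N) atTop (𝓝 0) := by
    refine tendsto_of_tendsto_of_tendsto_of_le_of_le h2Bneg h2B
      (fun N => ?_) (fun N => ?_)
    · exact neg_le_of_abs_le (hdiff N)
    · exact le_of_abs_le (hdiff N)
  have hZW : Tendsto (fun N => Z N / ((W N : ℕ) : ℝ)) atTop (𝓝 (∫ y, f y ∂μ)) := by
    have h5 := hd0.add hAADr
    rw [zero_add] at h5
    refine h5.congr fun N => ?_
    ring
  -- composed along ν
  have hνtd : Tendsto ν atTop atTop := nu_tendsto W hW1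
  have hZWν : Tendsto (fun u => Z (ν u) / ((W (ν u) : ℕ) : ℝ)) atTop (𝓝 (∫ y, f y ∂μ)) :=
    hZW.comp hνtd
  -- block averages tend to the integral
  have hA : Tendsto (fun t => (∑ M ∈ Finset.range (psum ℓg t), sfn M) /
      (∑ M ∈ Finset.range (psum ℓg t), ((e M : ℕ) : ℝ))) atTop (𝓝 (∫ y, f y ∂μ)) := by
    have hw : ∀ u, (1:ℝ) ≤ ((W (ν u) : ℕ) : ℝ) := fun u => by exact_mod_cast hW1 (ν u)
    have h6 := wavg hw hZWν
    refine (h6.congr fun t => ?_)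
    rw [hblockS t, hblockE t]
    congr 1
    exact Finset.sum_congr rfl fun u _ => mul_div_cancel₀ _ (hWposR (ν u)).ne'
  -- ratio of consecutive block sums tends to 1
  have hR : Tendsto (fun t => (∑ M ∈ Finset.range (psum ℓg (t+1)), ((e M : ℕ) : ℝ)) /
      (∑ M ∈ Finset.range (psum ℓg t), ((e M : ℕ) : ℝ))) atTop (𝓝 1) := by
    set cR : ℕ → ℝ := fun t => ∑ u ∈ Finset.range t, ((W (ν u) : ℕ) : ℝ) with hcRdef
    have hcRt : ∀ t : ℕ, (t:ℝ) ≤ cR t := by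
      intro t
      simp only [hcRdef]
      calc (t:ℝ) = ∑ _u ∈ Finset.range t, (1:ℝ) := by simp
      _ ≤ _ := Finset.sum_le_sum fun u _ => by exact_mod_cast hW1 (ν u)
    have hcRpos : ∀ t : ℕ, 1 ≤ t → (0:ℝ) < cR t := fun t ht =>
      lt_of_lt_of_le (by exact_mod_cast ht) (hcRt t)
    have hcRsucc : ∀ t, cR (t+1) = cR t + ((W (ν t) : ℕ) : ℝ) := by
      intro t
      simp only [hcRdef]
      rw [Finset.sum_range_succ]
    have hinv : ∀ t : ℕ, 1 ≤ t → ((W (ν t) : ℕ) : ℝ) * ((ν t : ℝ) + 1) ≤ cR t := by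
      intro t ht
      have h7 := nu_inv W hW1 t ht
      have h8 : cR t = ((cum W t : ℕ) : ℝ) := by
        simp only [hcRdef]
        rw [cum_spec]
        push_cast
        rfl
      rw [h8]
      exact_mod_cast h7
    have hupper : Tendsto (fun t => 1 + 1 / ((ν t : ℝ) + 1)) atTop (𝓝 1) := by
      have h9 : Tendsto (fun t => ((ν t : ℝ) + 1)) atTop atTop :=
        tendsto_atTop_add_const_right atTop 1 (tendsto_natCast_atTop_atTop.comp hνtd)
      have h10 : Tendsto (fun t => 1 / ((ν t : ℝ) + 1)) atTop (𝓝 0) :=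
        Tendsto.div_atTop tendsto_const_nhds h9
      have := (tendsto_const_nhds (x := (1:ℝ)) (f := atTop (α := ℕ))).add h10
      rw [add_zero] at this
      exact this
    have hmain : Tendsto (fun t => cR (t+1) / cR t) atTop (𝓝 1) := by
      refine tendsto_of_tendsto_of_tendsto_of_le_of_le' tendsto_const_nhds hupper ?_ ?_
      · filter_upwards [eventually_ge_atTop 1] with t ht
        have hpos := hcRpos t ht
        rw [le_div_iff₀ hpos, one_mul, hcRsucc]
        have : (0:ℝ) ≤ ((W (ν t) : ℕ) : ℝ) := Nat.cast_nonneg _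
        linarith
      · filter_upwards [eventually_ge_atTop 1] with t ht
        have hpos := hcRpos t ht
        have hν1 : (0:ℝ) < (ν t : ℝ) + 1 := by positivity
        rw [hcRsucc, div_le_iff₀ hpos]
        have h11 : ((W (ν t) : ℕ) : ℝ) ≤ cR t / ((ν t : ℝ) + 1) := by
          rw [le_div_iff₀ hν1]
          exact hinv t ht
        have h12 : cR t / ((ν t : ℝ) + 1) = cR t * (1 / ((ν t : ℝ) + 1)) := by ring
        calc cR t + ((W (ν t) : ℕ) : ℝ) ≤ cR t + cR t * (1 / ((ν t : ℝ) + 1)) := by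
              rw [← h12]; linarith
        _ = (1 + 1 / ((ν t : ℝ) + 1)) * cR t := by ring
    refine hmain.congr fun t => ?_
    rw [hblockE t, hblockE (t+1)]
  -- conclude via the cut lemma
  have hfinal := cutlem hℓ1 (e := fun M => ((e M : ℕ) : ℝ)) (s := sfn)
    (fun M => by exact_mod_cast hE1 M) hsb hA hR
  exact hfinal
end

section
/- The set of matrices A in SL(2, ℝ) such that no complex root of unity is an eigenvalue of A — that is, such that for every ζ ∈ ℂ with ζ^n = 1 for some integer n ≥ 1, ζ is not a root of the characteristic polynomial of A — is a dense subset of SL(2, ℝ); indeed it is the intersection of countably many open dense subsets of SL(2, ℝ), hence comeager. -/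
open Topology Filter

lemma char2 (M : Matrix (Fin 2) (Fin 2) ℝ) (h : M.det = 1) (ζ : ℂ) :
    (M.map Complex.ofReal - ζ • (1 : Matrix (Fin 2) (Fin 2) ℂ)).det =
      ζ ^ 2 - (↑(M 0 0 + M 1 1) : ℂ) * ζ + 1 := by
  rw [Matrix.det_fin_two] at h ⊢
  simp [Matrix.map_apply, Matrix.one_apply]
  have : ((M 0 0 * M 1 1 - M 0 1 * M 1 0 : ℝ) : ℂ) = 1 := by exact_mod_cast h
  push_cast at this ⊢
  linear_combination this

def Tbad : Set ℝ := {x | ∃ ζ : ℂ, (∃ n : ℕ, 1 ≤ n ∧ ζ ^ n = 1) ∧ ζ ^ 2 - (x : ℂ) * ζ + 1 = 0}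

lemma Tbad_countable : Tbad.Countable := by
  have hR : ({ζ : ℂ | ∃ n : ℕ, 1 ≤ n ∧ ζ ^ n = 1}).Countable := by
    have he : {ζ : ℂ | ∃ n : ℕ, 1 ≤ n ∧ ζ ^ n = 1} = ⋃ n : ℕ, {ζ : ℂ | 1 ≤ n ∧ ζ ^ n = 1} := by
      ext ζ; simp [Set.mem_iUnion]
    rw [he]
    refine Set.countable_iUnion fun n => ?_
    rcases Nat.eq_zero_or_pos n with h | h
    · simp [h]
    · have hp0 : (Polynomial.X ^ n - 1 : Polynomial ℂ) ≠ 0 := by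
        intro hc
        have h1 : (Polynomial.X ^ n - 1 : Polynomial ℂ) = Polynomial.X ^ n - Polynomial.C 1 := by
          simp
        rw [h1] at hc
        have h2 := congrArg Polynomial.natDegree hc
        rw [Polynomial.natDegree_X_pow_sub_C] at h2
        simp at h2; omega
      refine Set.Finite.countable ((Polynomial.finite_setOf_isRoot hp0).subset ?_)
      intro ζ hζ
      simp only [Set.mem_setOf_eq, Polynomial.IsRoot, Polynomial.eval_sub, Polynomial.eval_pow,
        Polynomial.eval_X, Polynomial.eval_one]
      exact sub_eq_zero.2 hζ.2
  have hsub : Tbad ⊆ (fun ζ : ℂ => (ζ + ζ⁻¹).re) '' {ζ : ℂ | ∃ n : ℕ, 1 ≤ n ∧ ζ ^ n = 1} := by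
    rintro x ⟨ζ, hζ, heq⟩
    refine ⟨ζ, hζ, ?_⟩
    obtain ⟨n, hn, hpow⟩ := hζ
    have hne : ζ ≠ 0 := by
      intro h0; rw [h0, zero_pow (by omega)] at hpow; exact zero_ne_one hpow
    have hx : (x : ℂ) = ζ + ζ⁻¹ := by
      field_simp
      linear_combination -heq
    simp only [← hx, Complex.ofReal_re]
  exact (hR.image _).mono hsub

lemma Ioo_not_countable {x y : ℝ} (h : x < y) : ¬ (Set.Ioo x y).Countable := by
  intro hc
  have h1 := hc.le_aleph0
  rw [Cardinal.mk_Ioo_real h] at h1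
  exact Cardinal.aleph0_lt_continuum.not_ge h1

lemma dense_trace_notin {T : Set ℝ} (hT : T.Countable) :
    Dense {A : {M : Matrix (Fin 2) (Fin 2) ℝ // M.det = 1} | A.1 0 0 + A.1 1 1 ∉ T} := by
  intro A
  by_cases h : (A.1 0 0 + A.1 1 1) ∉ T
  · exact subset_closure h
  set a := A.1 0 0 with ha'
  set b := A.1 0 1 with hb'
  set c := A.1 1 0 with hc'
  set d := A.1 1 1 with hd'
  have hdet : a * d - b * c = 1 := by
    have := A.2; rwa [Matrix.det_fin_two] at this
  have hAeta : A.1 = !![a, b; c, d] := Matrix.eta_fin_two A.1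
  by_cases hzero : a = 0 ∧ d = 0
  · -- case a = d = 0; then b ≠ 0
    obtain ⟨haz, hdz⟩ := hzero
    have hbc : b * c = -1 := by
      rw [haz] at hdet; linarith
    have hbne : b ≠ 0 := by
      intro h0; rw [h0] at hbc; simp at hbc
    set Bad : Set ℝ := {u : ℝ | a + (d + b * u) ∈ T} with hBad
    have hBadc : Bad.Countable := by
      refine (hT.image (fun t => (t - a - d) / b)).mono ?_
      rintro u hu
      exact ⟨a + (d + b * u), hu, by field_simp; ring⟩
    have hex : ∀ k : ℕ, ∃ u : ℝ, u ∈ Set.Ioo (0:ℝ) (1/(k+1)) ∧ u ∉ Bad := by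
      intro k
      by_contra hcon
      push_neg at hcon
      exact Ioo_not_countable (x := (0:ℝ)) (y := 1/(k+1)) (by positivity)
        (hBadc.mono hcon)
    choose u hu1 hu2 using hex
    have hupos : ∀ k, 0 < u k := fun k => (hu1 k).1
    have hule : ∀ k, u k ≤ 1/(k+1) := fun k => (hu1 k).2.le
    have hu0 : Filter.Tendsto u Filter.atTop (𝓝 0) :=
      tendsto_of_tendsto_of_tendsto_of_le_of_le tendsto_const_nhds
        tendsto_one_div_add_atTop_nhds_zero_nat (fun k => (hupos k).le) hule
    set B : ℕ → {M : Matrix (Fin 2) (Fin 2) ℝ // M.det = 1} :=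
      fun k => ⟨!![a, b; c, d + b * u k], by
        rw [Matrix.det_fin_two_of, haz]
        rw [haz] at hdet; linarith⟩ with hB
    refine mem_closure_of_tendsto (f := B) (b := Filter.atTop) ?_ ?_
    · rw [tendsto_subtype_rng]
      rw [hAeta]; refine tendsto_pi_nhds.mpr ?_
      intro i
      rw [tendsto_pi_nhds]
      intro j
      have hlim : Filter.Tendsto (fun k : ℕ => d + b * u k) Filter.atTop (𝓝 d) := by
        have h2 := (tendsto_const_nhds (x := b)).mul hu0
        simpa using (tendsto_const_nhds (x := d)).add h2
      fin_cases i <;> fin_cases j <;> simp only [hB] <;> simp <;>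
        first
          | exact tendsto_const_nhds
          | exact hlim
    · refine Filter.Eventually.of_forall fun k => ?_
      show (B k).1 0 0 + (B k).1 1 1 ∉ T
      have htr : (B k).1 0 0 + (B k).1 1 1 = a + (d + b * u k) := by simp [hB]
      rw [htr]
      exact hu2 k
  · -- case ¬(a = 0 ∧ d = 0)
    set Bad : Set ℝ := {s : ℝ | 0 < s ∧ a * (1 + s) + d / (1 + s) ∈ T} with hBad
    have hBadc : Bad.Countable := by
      have hsub : Bad ⊆ ⋃ t ∈ T, {s : ℝ | 0 < s ∧ a * (1 + s) + d / (1 + s) = t} := by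
        rintro s ⟨hs, hmem⟩
        exact Set.mem_biUnion hmem ⟨hs, rfl⟩
      refine Set.Countable.mono hsub (hT.biUnion fun t ht => ?_)
      set p : Polynomial ℝ :=
        Polynomial.C a * Polynomial.X ^ 2 + Polynomial.C (2*a - t) * Polynomial.X +
          Polynomial.C (a - t + d) with hp
      have hp0 : p ≠ 0 := by
        intro hc0
        have h2 : p.coeff 2 = 0 := by rw [hc0]; simp
        have h1 : p.coeff 1 = 0 := by rw [hc0]; simp
        have h0 : p.coeff 0 = 0 := by rw [hc0]; simp
        rw [hp] at h2 h1 h0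
        simp [Polynomial.coeff_add, Polynomial.coeff_C_mul, Polynomial.coeff_X_pow,
          Polynomial.coeff_C] at h2 h1 h0
        exact hzero ⟨h2, by linarith⟩
      refine ((Polynomial.finite_setOf_isRoot hp0).subset ?_).countable
      rintro s ⟨hs, heq⟩
      have h1s : (1:ℝ) + s ≠ 0 := by linarith
      show p.IsRoot s
      rw [hp]
      simp only [Polynomial.IsRoot, Polynomial.eval_add, Polynomial.eval_mul,
        Polynomial.eval_C, Polynomial.eval_X, Polynomial.eval_pow]
      field_simp at heq
      linear_combination heq
    have hex : ∀ k : ℕ, ∃ s : ℝ, s ∈ Set.Ioo (0:ℝ) (1/(k+1)) ∧ s ∉ Bad := by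
      intro k
      by_contra hcon
      push_neg at hcon
      exact Ioo_not_countable (x := (0:ℝ)) (y := 1/(k+1)) (by positivity)
        (hBadc.mono hcon)
    choose s hs1 hs2 using hex
    have hspos : ∀ k, 0 < s k := fun k => (hs1 k).1
    have hsle : ∀ k, s k ≤ 1/(k+1) := fun k => (hs1 k).2.le
    have hs0 : Filter.Tendsto s Filter.atTop (𝓝 0) :=
      tendsto_of_tendsto_of_tendsto_of_le_of_le tendsto_const_nhds
        tendsto_one_div_add_atTop_nhds_zero_nat (fun k => (hspos k).le) hsle
    have h1s : ∀ k, (1:ℝ) + s k ≠ 0 := fun k => by have := hspos k; linarith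
    set B : ℕ → {M : Matrix (Fin 2) (Fin 2) ℝ // M.det = 1} :=
      fun k => ⟨!![a * (1 + s k), b / (1 + s k); c * (1 + s k), d / (1 + s k)], by
        rw [Matrix.det_fin_two_of]
        field_simp [h1s k]
        linear_combination hdet⟩ with hB
    have h1slim : Filter.Tendsto (fun k => 1 + s k) Filter.atTop (𝓝 1) := by
      simpa using (tendsto_const_nhds (x := (1:ℝ))).add hs0
    refine mem_closure_of_tendsto (f := B) (b := Filter.atTop) ?_ ?_
    · rw [tendsto_subtype_rng]
      rw [hAeta]; refine tendsto_pi_nhds.mpr ?_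
      intro i
      rw [tendsto_pi_nhds]
      intro j
      have hmul : ∀ x : ℝ, Filter.Tendsto (fun k => x * (1 + s k)) Filter.atTop (𝓝 x) := by
        intro x; simpa using (tendsto_const_nhds (x := x)).mul h1slim
      have hdiv : ∀ x : ℝ, Filter.Tendsto (fun k => x / (1 + s k)) Filter.atTop (𝓝 x) := by
        intro x; have := Filter.Tendsto.div (f := fun _ => x) (g := fun k => 1 + s k) tendsto_const_nhds h1slim one_ne_zero; rwa [div_one] at this
      fin_cases i <;> fin_cases j <;> simp only [hB] <;> simp <;>
        first
          | exact hmul _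
          | exact hdiv _
    · refine Filter.Eventually.of_forall fun k => ?_
      show (B k).1 0 0 + (B k).1 1 1 ∉ T
      have htr : (B k).1 0 0 + (B k).1 1 1 = a * (1 + s k) + d / (1 + s k) := by simp [hB]
      rw [htr]
      intro hmem
      exact (hs2 k) ⟨hspos k, hmem⟩

/-- The set of matrices in `SL(2, ℝ)` having no complex root of unity as an eigenvalue
is dense; indeed it is the intersection of countably many open dense subsets. -/
theorem stmt_4 :
    Dense {A : {M : Matrix (Fin 2) (Fin 2) ℝ // M.det = 1} |
        ∀ ζ : ℂ, (∃ n : ℕ, 1 ≤ n ∧ ζ ^ n = 1) →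
          (A.1.map Complex.ofReal - ζ • (1 : Matrix (Fin 2) (Fin 2) ℂ)).det ≠ 0} ∧
    ∃ U : ℕ → Set {M : Matrix (Fin 2) (Fin 2) ℝ // M.det = 1},
      (∀ n, IsOpen (U n)) ∧ (∀ n, Dense (U n)) ∧
      {A : {M : Matrix (Fin 2) (Fin 2) ℝ // M.det = 1} |
          ∀ ζ : ℂ, (∃ n : ℕ, 1 ≤ n ∧ ζ ^ n = 1) →
            (A.1.map Complex.ofReal - ζ • (1 : Matrix (Fin 2) (Fin 2) ℂ)).det ≠ 0} =
        ⋂ n, U n := by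
  have hTne : (2:ℝ) ∈ Tbad := ⟨1, ⟨1, le_refl 1, one_pow 1⟩, by norm_num⟩
  obtain ⟨f, hf⟩ := Tbad_countable.exists_eq_range ⟨2, hTne⟩
  set S := {A : {M : Matrix (Fin 2) (Fin 2) ℝ // M.det = 1} |
      ∀ ζ : ℂ, (∃ n : ℕ, 1 ≤ n ∧ ζ ^ n = 1) →
        (A.1.map Complex.ofReal - ζ • (1 : Matrix (Fin 2) (Fin 2) ℂ)).det ≠ 0} with hSdef
  have hSeq : S = {A : {M : Matrix (Fin 2) (Fin 2) ℝ // M.det = 1} |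
      (A.1 0 0 + A.1 1 1) ∉ Tbad} := by
    ext A
    constructor
    · intro hA hmem
      obtain ⟨ζ, hrou, heq⟩ := hmem
      exact hA ζ hrou (by rw [char2 A.1 A.2 ζ]; exact heq)
    · intro hA ζ hrou hdet
      exact hA ⟨ζ, hrou, by rw [char2 A.1 A.2 ζ] at hdet; exact hdet⟩
  set U : ℕ → Set {M : Matrix (Fin 2) (Fin 2) ℝ // M.det = 1} :=
    fun n => {A | A.1 0 0 + A.1 1 1 ≠ f n} with hUdef
  have hU : S = ⋂ n, U n := by
    rw [hSeq]
    ext A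
    simp only [Set.mem_iInter, hUdef, Set.mem_setOf_eq, hf, Set.mem_range, not_exists]
    exact ⟨fun h n => fun he => h n he.symm, fun h n he => h n he.symm⟩
  have hUopen : ∀ n, IsOpen (U n) := by
    intro n
    have hcont : Continuous fun A : {M : Matrix (Fin 2) (Fin 2) ℝ // M.det = 1} =>
        A.1 0 0 + A.1 1 1 := by
      apply Continuous.add
      · exact (continuous_apply (0 : Fin 2)).comp
          ((continuous_apply (0 : Fin 2)).comp continuous_subtype_val)
      · exact (continuous_apply (1 : Fin 2)).comp
          ((continuous_apply (1 : Fin 2)).comp continuous_subtype_val)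
    exact IsOpen.preimage hcont isOpen_compl_singleton
  have hUdense : ∀ n, Dense (U n) :=
    fun n => dense_trace_notin (Set.countable_singleton (f n))
  have hSdense : Dense S := by
    rw [hSeq]
    exact dense_trace_notin Tbad_countable
  exact ⟨hSdense, U, hUopen, hUdense, hU⟩
end
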